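/- arXiv:2001.05082 — 12 statements merged into one kernel-verified Lean document; each statement's English description precedes it below -/
import Mathlib

section
/- Let (Ω, ℱ, P) be a probability space, let T and n be positive integers, and let X_1, …, X_{nT} be {0,1}-valued random variables such that for each j ∈ {1, …, T} the family {X_{j+iT} : i = 0, …, n−1} is mutually independent. Let X^{(j)} = Σ_{i=0}^{n−1} X_{j+iT}, let μ_j = E[X^{(j)}], let μ = min_j μ_j, and let X = X^{(1)} + ⋯ + X^{(T)}. Then for every δ with 0 < δ < 1, P( X ≤ (1−δ) μ T ) ≤ T · exp(−δ² μ / 2). -/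
open MeasureTheory ProbabilityTheory Real Finset

/-- Key analytic inequality for the multiplicative Chernoff lower tail:
`-(1-δ)·log(1-δ) - δ ≤ -δ²/2` for `0 < δ < 1`. -/
lemma chernoff_log_ineq (δ : ℝ) (h0 : 0 < δ) (h1 : δ < 1) :
    -(1 - δ) * Real.log (1 - δ) - δ ≤ -δ ^ 2 / 2 := by
  have hx : 0 < 1 - δ := by linarith
  set u := -Real.log (1 - δ) with hu
  have hu0 : 0 < u := by
    have := Real.log_neg hx (by linarith)
    simp only [hu]; linarith
  have hsinh : u ≤ Real.sinh u := (Real.self_lt_sinh_iff.mpr hu0).le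
  rw [Real.sinh_eq] at hsinh
  have h1x : Real.exp u = (1 - δ)⁻¹ := by
    rw [hu, Real.exp_neg, Real.exp_log hx]
  have h2x : Real.exp (-u) = 1 - δ := by
    rw [hu, neg_neg, Real.exp_log hx]
  rw [h1x, h2x] at hsinh
  have hinv : (1 - δ) * (1 - δ)⁻¹ = 1 := mul_inv_cancel₀ hx.ne'
  have hlog : Real.log (1 - δ) = -u := by rw [hu]; ring
  rw [hlog]
  nlinarith [mul_le_mul_of_nonneg_left hsinh hx.le, hinv]

/-- Chernoff-type bound for a sum of dependent indicator random variables: the `n*T`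
indicators `X 1, …, X (n*T)` need only be mutually independent within each of the `T`
arithmetic-progression groups `{X (j + i*T) : i = 0, …, n-1}` (`j = 1, …, T`).
With `μ` the minimum of the group means, `P(X ≤ (1-δ)μT) ≤ T·exp(-δ²μ/2)`. -/
theorem stmt0 {Ω : Type*} [MeasurableSpace Ω] (P : Measure Ω) [IsProbabilityMeasure P]
    (T n : ℕ) (hT : 0 < T) (hn : 0 < n)
    (X : ℕ → Ω → ℝ) (hmeas : ∀ k, Measurable (X k))
    (h01 : ∀ k ω, X k ω = 0 ∨ X k ω = 1)
    (hindep : ∀ j ∈ Finset.Icc 1 T,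
      iIndepFun (fun i : Fin n => X (j + i * T)) P)
    (μ : ℕ → ℝ)
    (hμ : ∀ j, μ j = ∫ ω, (∑ i ∈ Finset.range n, X (j + i * T) ω) ∂P)
    (μmin : ℝ)
    (hμmin : μmin = (Finset.Icc 1 T).inf' (Finset.nonempty_Icc.mpr hT) μ)
    (δ : ℝ) (hδ0 : 0 < δ) (hδ1 : δ < 1) :
    P {ω | ∑ j ∈ Finset.Icc 1 T, ∑ i ∈ Finset.range n, X (j + i * T) ω
        ≤ (1 - δ) * μmin * T}
      ≤ ENNReal.ofReal (T * exp (-δ ^ 2 * μmin / 2)) := by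
  have hx : (0 : ℝ) < 1 - δ := by linarith
  set t : ℝ := Real.log (1 - δ) with ht_def
  have ht : t < 0 := Real.log_neg hx (by linarith)
  have hexpt : Real.exp t = 1 - δ := Real.exp_log hx
  -- integrability of each indicator
  have hXint : ∀ k, Integrable (X k) P := by
    intro k
    refine Integrable.mono' (integrable_const 1) (hmeas k).aestronglyMeasurable ?_
    filter_upwards with ω
    rcases h01 k ω with h | h <;> simp [h]
  have hXnn : ∀ k ω, 0 ≤ X k ω := by
    intro k ω; rcases h01 k ω with h | h <;> simp [h]
  -- exponential of indicator is affine
  have hexp_eq : ∀ k ω, Real.exp (t * X k ω) = 1 + (Real.exp t - 1) * X k ω := by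
    intro k ω
    rcases h01 k ω with h | h
    · rw [h]; simp
    · rw [h]; simp
  have hint : ∀ k, Integrable (fun ω => Real.exp (t * X k ω)) P := by
    intro k
    have h := (integrable_const (1 : ℝ)).add ((hXint k).const_mul (Real.exp t - 1))
    exact h.congr (ae_of_all _ fun ω => (hexp_eq k ω).symm)
  -- mgf of each indicator
  have hmgf : ∀ k, mgf (X k) P t = 1 + (Real.exp t - 1) * ∫ ω, X k ω ∂P := by
    intro k
    rw [mgf]
    calc ∫ ω, Real.exp (t * X k ω) ∂P
        = ∫ ω, (1 + (Real.exp t - 1) * X k ω) ∂P := by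
          exact integral_congr_ae (ae_of_all _ fun ω => hexp_eq k ω)
      _ = 1 + (Real.exp t - 1) * ∫ ω, X k ω ∂P := by
          rw [integral_add (integrable_const 1) ((hXint k).const_mul _),
            integral_const, integral_const_mul]
          simp
  have hμnn : ∀ j, 0 ≤ μ j := by
    intro j
    rw [hμ j]
    exact integral_nonneg fun ω => Finset.sum_nonneg fun i _ => hXnn _ ω
  have hμmin_nn : 0 ≤ μmin := by
    rw [hμmin]
    exact Finset.le_inf' _ _ fun j _ => hμnn j
  have hμmin_le : ∀ j ∈ Finset.Icc 1 T, μmin ≤ μ j := by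
    intro j hj
    rw [hμmin]; exact Finset.inf'_le μ hj
  -- per-group Chernoff bound
  have key : ∀ j ∈ Finset.Icc 1 T,
      (P {ω | (∑ i ∈ Finset.range n, X (j + i * T) ω) ≤ (1 - δ) * μmin}).toReal
        ≤ Real.exp (-δ ^ 2 * μmin / 2) := by
    intro j hj
    set X' : Fin n → Ω → ℝ := fun i => X (j + i * T) with hX'
    have hmeas' : ∀ i, Measurable (X' i) := fun i => hmeas _
    have hfun : (fun ω => ∑ i ∈ Finset.range n, X (j + i * T) ω)
        = ∑ i : Fin n, X' i := by
      funext ω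
      rw [Finset.sum_apply]
      exact (Fin.sum_univ_eq_sum_range (fun i => X (j + i * T) ω) n).symm
    have hint_sum : Integrable (fun ω => Real.exp (t * (∑ i : Fin n, X' i) ω)) P :=
      (hindep j hj).integrable_exp_mul_sum hmeas' (fun i _ => hint _)
    have hcher := measure_le_le_exp_mul_mgf (X := ∑ i : Fin n, X' i)
      ((1 - δ) * μmin) ht.le hint_sum
    -- bound the mgf of the group sum
    have hμj : μ j = ∑ i : Fin n, ∫ ω, X' i ω ∂P := by
      rw [hμ j]
      calc ∫ ω, ∑ i ∈ Finset.range n, X (j + i * T) ω ∂P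
          = ∫ ω, ∑ i : Fin n, X' i ω ∂P := by
            congr 1
            funext ω
            exact (Fin.sum_univ_eq_sum_range (fun i => X (j + i * T) ω) n).symm
        _ = ∑ i : Fin n, ∫ ω, X' i ω ∂P :=
            integral_finset_sum _ (fun i _ => hXint _)
    have hmgf_sum : mgf (∑ i : Fin n, X' i) P t ≤ Real.exp ((Real.exp t - 1) * μ j) := by
      rw [(hindep j hj).mgf_sum hmeas' Finset.univ]
      calc ∏ i : Fin n, mgf (X' i) P t
          ≤ ∏ i : Fin n, Real.exp ((Real.exp t - 1) * ∫ ω, X' i ω ∂P) := by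
            refine Finset.prod_le_prod (fun i _ => mgf_nonneg) (fun i _ => ?_)
            rw [hmgf]
            have := Real.add_one_le_exp ((Real.exp t - 1) * ∫ ω, X' i ω ∂P)
            linarith
        _ = Real.exp (∑ i : Fin n, (Real.exp t - 1) * ∫ ω, X' i ω ∂P) := by
            rw [Real.exp_sum]
        _ = Real.exp ((Real.exp t - 1) * μ j) := by
            rw [hμj, Finset.mul_sum]
    have hstep : Real.exp (-t * ((1 - δ) * μmin)) * mgf (∑ i : Fin n, X' i) P t
        ≤ Real.exp (-δ ^ 2 * μmin / 2) := by
      calc Real.exp (-t * ((1 - δ) * μmin)) * mgf (∑ i : Fin n, X' i) P t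
          ≤ Real.exp (-t * ((1 - δ) * μmin)) * Real.exp ((Real.exp t - 1) * μ j) :=
            mul_le_mul_of_nonneg_left hmgf_sum (Real.exp_pos _).le
        _ = Real.exp (-t * ((1 - δ) * μmin) + (Real.exp t - 1) * μ j) :=
            (Real.exp_add _ _).symm
        _ ≤ Real.exp (-δ ^ 2 * μmin / 2) := by
            apply Real.exp_le_exp.mpr
            have h1 : (Real.exp t - 1) * μ j ≤ (Real.exp t - 1) * μmin := by
              apply mul_le_mul_of_nonpos_left (hμmin_le j hj)
              rw [hexpt]; linarith
            have h2 := chernoff_log_ineq δ hδ0 hδ1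
            rw [hexpt]
            have h3 : -t * ((1 - δ) * μmin) + (-δ) * μmin
                = (-(1 - δ) * t - δ) * μmin := by ring
            have h4 : (-(1 - δ) * t - δ) * μmin ≤ (-δ ^ 2 / 2) * μmin :=
              mul_le_mul_of_nonneg_right h2 hμmin_nn
            have : (1 - δ - 1) * μ j ≤ (1 - δ - 1) * μmin := by
              rw [hexpt] at h1; exact h1
            nlinarith [this]
    calc (P {ω | (∑ i ∈ Finset.range n, X (j + i * T) ω) ≤ (1 - δ) * μmin}).toReal
        = (P {ω | (∑ i : Fin n, X' i) ω ≤ (1 - δ) * μmin}).toReal := by rw [← hfun]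
      _ ≤ Real.exp (-t * ((1 - δ) * μmin)) * mgf (∑ i : Fin n, X' i) P t := hcher
      _ ≤ Real.exp (-δ ^ 2 * μmin / 2) := hstep
  -- union bound
  have hsub : {ω | ∑ j ∈ Finset.Icc 1 T, ∑ i ∈ Finset.range n, X (j + i * T) ω
        ≤ (1 - δ) * μmin * T}
      ⊆ ⋃ j ∈ Finset.Icc 1 T,
          {ω | (∑ i ∈ Finset.range n, X (j + i * T) ω) ≤ (1 - δ) * μmin} := by
    intro ω hω
    by_contra hc
    simp only [Set.mem_iUnion, Set.mem_setOf_eq, not_exists, not_le] at hc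
    have hlt : ∑ j ∈ Finset.Icc 1 T, (1 - δ) * μmin
        < ∑ j ∈ Finset.Icc 1 T, ∑ i ∈ Finset.range n, X (j + i * T) ω :=
      Finset.sum_lt_sum_of_nonempty (Finset.nonempty_Icc.mpr hT)
        (fun j hj => hc j hj)
    rw [Finset.sum_const, Nat.card_Icc, nsmul_eq_mul] at hlt
    simp only [Set.mem_setOf_eq] at hω
    have : ((T + 1 - 1 : ℕ) : ℝ) = (T : ℝ) := by
      push_cast [Nat.add_sub_cancel]; ring
    rw [this] at hlt
    nlinarith [hω, hlt]
  calc P {ω | ∑ j ∈ Finset.Icc 1 T, ∑ i ∈ Finset.range n, X (j + i * T) ω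
        ≤ (1 - δ) * μmin * T}
      ≤ P (⋃ j ∈ Finset.Icc 1 T,
          {ω | (∑ i ∈ Finset.range n, X (j + i * T) ω) ≤ (1 - δ) * μmin}) :=
        measure_mono hsub
    _ ≤ ∑ j ∈ Finset.Icc 1 T,
          P {ω | (∑ i ∈ Finset.range n, X (j + i * T) ω) ≤ (1 - δ) * μmin} :=
        measure_biUnion_finset_le _ _
    _ ≤ ∑ j ∈ Finset.Icc 1 T, ENNReal.ofReal (Real.exp (-δ ^ 2 * μmin / 2)) := by
        refine Finset.sum_le_sum fun j hj => ?_
        have hs : P {ω | (∑ i ∈ Finset.range n, X (j + i * T) ω) ≤ (1 - δ) * μmin}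
            = ENNReal.ofReal
              (P {ω | (∑ i ∈ Finset.range n, X (j + i * T) ω) ≤ (1 - δ) * μmin}).toReal :=
          (ENNReal.ofReal_toReal (measure_ne_top P _)).symm
        rw [hs]
        exact ENNReal.ofReal_le_ofReal (key j hj)
    _ = ENNReal.ofReal (T * Real.exp (-δ ^ 2 * μmin / 2)) := by
        rw [Finset.sum_const, Nat.card_Icc, Nat.add_sub_cancel, nsmul_eq_mul,
          ENNReal.ofReal_mul (by positivity), ENNReal.ofReal_natCast]
end

section
/- Let α ∈ (0,1) and β = 1−α. Let X_1, …, X_m (m ≥ 3) be i.i.d. random variables on a probability space with P(X_i = 1) = α and P(X_i = 0) = β. For i ∈ {1, …, m−1} define Z_i = 1 if (X_i, X_{i+1}) = (1,0) and Z_i = 0 otherwise, and let Z = Σ_{i=1}^{m−1} Z_i. Then for every δ with 0 < δ < 1, P( |Z − αβ(m−1)| > δ αβ(m−1) ) ≤ 4 · exp( −δ² αβ (m−1) / 6 ). -/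
open MeasureTheory ProbabilityTheory Real Finset



lemma count_parity (r : ℕ) (hr : r < 2) : ∀ n : ℕ,
    (((Finset.Icc 1 n).filter (fun i => i % 2 = r)).card) = (n + r) / 2 := by
  intro n
  induction n with
  | zero => simp; omega
  | succ n ih =>
    rw [show Finset.Icc 1 (n+1) = insert (n+1) (Finset.Icc 1 n) by
      ext x; simp [Finset.mem_Icc]; omega]
    rw [Finset.filter_insert]
    by_cases h : (n+1) % 2 = r
    · rw [if_pos h, Finset.card_insert_of_notMem (by simp), ih]
      omega
    · rw [if_neg h, ih]
      omega

lemma bridge {Ω : Type*} [MeasurableSpace Ω] (P : Measure Ω) (m : ℕ)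
    (X : ℕ → Ω → ℝ)
    (hindep : iIndepFun
      (fun i : Fin m => X (i + 1)) P)
    (C : Finset ℕ) (hC : ∀ j ∈ C, 1 ≤ j ∧ j ≤ m)
    (B : ℕ → Set ℝ) (hB : ∀ j, MeasurableSet (B j)) :
    P (⋂ j ∈ C, X j ⁻¹' B j) = ∏ j ∈ C, P (X j ⁻¹' B j) := by
  have hg : ∀ x : {x // x ∈ C}, x.1 - 1 < m := fun x => by
    have := hC x.1 x.2; omega
  set g : {x // x ∈ C} → Fin m := fun x => ⟨x.1 - 1, hg x⟩ with hgdef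
  set S : Finset (Fin m) := C.attach.image g with hS
  have key := hindep.meas_biInter (S := S)
    (s := fun k : Fin m => X (k.1 + 1) ⁻¹' B (k.1 + 1))
    (fun k _ => ⟨B (k.1 + 1), hB _, rfl⟩)
  have hinj : Set.InjOn g C.attach := by
    intro x _ y _ hxy
    have hx := hC x.1 x.2; have hy := hC y.1 y.2
    have : x.1 - 1 = y.1 - 1 := congrArg Fin.val hxy
    exact Subtype.ext (by omega)
  have hset : (⋂ k ∈ S, X (k.1 + 1) ⁻¹' B (k.1 + 1)) = ⋂ j ∈ C, X j ⁻¹' B j := by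
    ext ω
    simp only [Set.mem_iInter, hS, Finset.mem_image, Finset.mem_attach]
    constructor
    · intro h j hj
      have := h (g ⟨j, hj⟩) ⟨⟨j, hj⟩, trivial, rfl⟩
      simpa [hgdef, Nat.sub_add_cancel (hC j hj).1] using this
    · rintro h k ⟨x, -, rfl⟩
      have := h x.1 x.2
      simpa [hgdef, Nat.sub_add_cancel (hC x.1 x.2).1] using this
  have hprod : (∏ k ∈ S, P (X (k.1 + 1) ⁻¹' B (k.1 + 1))) = ∏ j ∈ C, P (X j ⁻¹' B j) := by
    rw [hS, Finset.prod_image (fun x hx y hy h => hinj hx hy h)]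
    rw [← Finset.prod_attach C (fun j => P (X j ⁻¹' B j))]
    exact Finset.prod_congr rfl fun x _ => by
      simp [hgdef, Nat.sub_add_cancel (hC x.1 x.2).1]
  rw [hset, hprod] at key
  exact key

section
set_option linter.unusedSectionVars false
variable {Ω : Type*} [MeasurableSpace Ω] (P : Measure Ω) [IsProbabilityMeasure P]

lemma expb {x : ℝ} (hx : |x| ≤ 1) : exp x ≤ 1 + x + x^2/2 + (2/9)*|x|^3 := by
  have h := Real.exp_bound hx (by norm_num : 0 < 3)
  have h2 : ∑ i ∈ Finset.range 3, x ^ i / (Nat.factorial i : ℝ) = 1 + x + x^2/2 := by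
    norm_num [Finset.sum_range_succ, Nat.factorial]
  rw [h2] at h
  have h4 : ((Nat.succ 3 : ℕ) : ℝ) / ((Nat.factorial 3 : ℕ) * (3:ℕ)) = 2/9 := by
    norm_num [Nat.factorial]
  rw [h4] at h
  have := (abs_le.mp h).2
  linarith

lemma tail_upper {δ : ℝ} (h0 : 0 < δ) (h1 : δ < 1) :
    exp ((3/4)*δ) - 1 - (3/4)*δ*(1+δ) ≤ -(3/8)*δ^2 := by
  have hx : |(3/4)*δ| ≤ 1 := by rw [abs_of_nonneg (by linarith)]; linarith
  have h := expb hx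
  rw [abs_of_nonneg (by linarith : (0:ℝ) ≤ (3/4)*δ)] at h
  nlinarith [pow_pos h0 2, pow_pos h0 3, sq_nonneg δ, h0.le, h1.le,
    mul_le_of_le_one_right (sq_nonneg δ) h1.le]

lemma tail_lower {δ : ℝ} (h0 : 0 < δ) (h1 : δ < 1) :
    exp (-((3/4)*δ)) - 1 + (3/4)*δ*(1-δ) ≤ -(3/8)*δ^2 := by
  have hx : |(-((3/4)*δ))| ≤ 1 := by rw [abs_of_nonpos (by linarith)]; linarith
  have h := expb hx
  rw [abs_of_nonpos (by linarith : (-((3/4)*δ)) ≤ 0)] at h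
  nlinarith [pow_pos h0 2, pow_pos h0 3, sq_nonneg δ, h0.le, h1.le,
    mul_le_of_le_one_right (sq_nonneg δ) h1.le]

lemma pointwise_exp (A : ℕ → Set Ω) (s : Finset ℕ) (t : ℝ) (ω : Ω) :
    exp (t * ∑ i ∈ s, (A i).indicator (fun _ => (1:ℝ)) ω)
      = ∑ T ∈ s.powerset, (exp t - 1) ^ T.card *
          (⋂ i ∈ T, A i).indicator (fun _ => (1:ℝ)) ω := by
  have h1 : exp (t * ∑ i ∈ s, (A i).indicator (fun _ => (1:ℝ)) ω)
      = ∏ i ∈ s, ((exp t - 1) * (A i).indicator (fun _ => (1:ℝ)) ω + 1) := by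
    rw [Finset.mul_sum, Real.exp_sum]
    refine Finset.prod_congr rfl fun i _ => ?_
    by_cases h : ω ∈ A i
    · rw [Set.indicator_of_mem h]; simp
    · rw [Set.indicator_of_notMem h]; simp
  rw [h1, Finset.prod_add]
  refine Finset.sum_congr rfl fun T hT => ?_
  rw [Finset.prod_const_one, mul_one, Finset.prod_mul_distrib, Finset.prod_const]
  congr 1
  by_cases h : ω ∈ ⋂ i ∈ T, A i
  · rw [Set.indicator_of_mem h]
    refine Finset.prod_eq_one fun i hi => ?_
    rw [Set.indicator_of_mem (by exact Set.mem_iInter₂.mp h i hi)]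
  · rw [Set.indicator_of_notMem h]
    obtain ⟨i, hi, hωi⟩ : ∃ i ∈ T, ω ∉ A i := by
      by_contra hc; push_neg at hc; exact h (Set.mem_iInter₂.mpr hc)
    exact Finset.prod_eq_zero hi (Set.indicator_of_notMem hωi _)

lemma mgf_formula (A : ℕ → Set Ω) (hA : ∀ i, MeasurableSet (A i)) (p : ℝ) (hp0 : 0 ≤ p)
    (s : Finset ℕ)
    (hmeasT : ∀ T ⊆ s, P (⋂ i ∈ T, A i) = ENNReal.ofReal (p ^ T.card))
    (t : ℝ) :
    ∫ ω, exp (t * ∑ i ∈ s, (A i).indicator (fun _ => (1:ℝ)) ω) ∂P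
      = (1 + p * (exp t - 1)) ^ s.card := by
  have hint : ∀ T ∈ s.powerset, Integrable (fun ω =>
      (exp t - 1) ^ T.card * (⋂ i ∈ T, A i).indicator (fun _ => (1:ℝ)) ω) P := by
    intro T _
    exact ((integrable_const (1:ℝ)).indicator
      (Finset.measurableSet_biInter T fun i _ => hA i)).const_mul _
  calc ∫ ω, exp (t * ∑ i ∈ s, (A i).indicator (fun _ => (1:ℝ)) ω) ∂P
      = ∫ ω, ∑ T ∈ s.powerset, (exp t - 1) ^ T.card *
          (⋂ i ∈ T, A i).indicator (fun _ => (1:ℝ)) ω ∂P := by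
        refine integral_congr_ae (Filter.Eventually.of_forall fun ω => ?_)
        exact pointwise_exp A s t ω
    _ = ∑ T ∈ s.powerset, ∫ ω, (exp t - 1) ^ T.card *
          (⋂ i ∈ T, A i).indicator (fun _ => (1:ℝ)) ω ∂P := integral_finset_sum _ hint
    _ = ∑ T ∈ s.powerset, ((exp t - 1) * p) ^ T.card := by
        refine Finset.sum_congr rfl fun T hT => ?_
        rw [integral_const_mul, integral_indicator_const _
          (Finset.measurableSet_biInter T fun i _ => hA i)]
        rw [measureReal_def, hmeasT T (Finset.mem_powerset.mp hT),
          ENNReal.toReal_ofReal (pow_nonneg hp0 _), smul_eq_mul, mul_one, mul_pow]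
    _ = (1 + p * (exp t - 1)) ^ s.card := by
        have := Finset.prod_add (fun _ : ℕ => (exp t - 1) * p) (fun _ : ℕ => (1:ℝ)) s
        rw [Finset.prod_const] at this
        rw [show (1 + p * (exp t - 1)) = ((exp t - 1) * p + 1) by ring, this]
        refine Finset.sum_congr rfl fun T hT => ?_
        rw [Finset.prod_const, Finset.prod_const_one, mul_one]

lemma half_bound (A : ℕ → Set Ω) (hA : ∀ i, MeasurableSet (A i)) (p : ℝ)
    (hp0 : 0 ≤ p) (hp1 : p ≤ 1) (s : Finset ℕ)
    (hmeasT : ∀ T ⊆ s, P (⋂ i ∈ T, A i) = ENNReal.ofReal (p ^ T.card))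
    (δ : ℝ) (hδ0 : 0 < δ) (hδ1 : δ < 1) :
    P {ω | (1+δ) * (p * s.card) ≤ ∑ i ∈ s, (A i).indicator (fun _ => (1:ℝ)) ω}
        ≤ ENNReal.ofReal (exp (-(3/8) * δ^2 * (p * s.card))) ∧
    P {ω | (∑ i ∈ s, (A i).indicator (fun _ => (1:ℝ)) ω) ≤ (1-δ) * (p * s.card)}
        ≤ ENNReal.ofReal (exp (-(3/8) * δ^2 * (p * s.card))) := by
  set S : Ω → ℝ := fun ω => ∑ i ∈ s, (A i).indicator (fun _ => (1:ℝ)) ω with hS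
  set n : ℝ := (s.card : ℝ) with hn
  have hn0 : 0 ≤ n := Nat.cast_nonneg _
  have hint : ∀ t : ℝ, Integrable (fun ω => exp (t * S ω)) P := by
    intro t
    have : (fun ω => exp (t * S ω)) = fun ω => ∑ T ∈ s.powerset, (exp t - 1) ^ T.card *
        (⋂ i ∈ T, A i).indicator (fun _ => (1:ℝ)) ω := funext fun ω => pointwise_exp A s t ω
    rw [this]
    exact integrable_finset_sum _ fun T _ => ((integrable_const (1:ℝ)).indicator
      (Finset.measurableSet_biInter T fun i _ => hA i)).const_mul _
  have hmgf : ∀ t : ℝ, mgf S P t = (1 + p * (exp t - 1)) ^ s.card := by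
    intro t
    rw [mgf]
    exact mgf_formula P A hA p hp0 s hmeasT t
  have hbase : ∀ t : ℝ, 0 ≤ 1 + p * (exp t - 1) := by
    intro t
    nlinarith [Real.exp_pos t]
  have hpow : ∀ t : ℝ, (1 + p * (exp t - 1)) ^ s.card ≤ exp (n * (p * (exp t - 1))) := by
    intro t
    calc (1 + p * (exp t - 1)) ^ s.card ≤ (exp (p * (exp t - 1))) ^ s.card := by
          refine pow_le_pow_left₀ (hbase t) ?_ _
          linarith [Real.add_one_le_exp (p * (exp t - 1))]
      _ = exp (n * (p * (exp t - 1))) := by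
          rw [← Real.exp_nat_mul]
  constructor
  · have key := measure_ge_le_exp_mul_mgf (X := S) (μ := P) ((1+δ) * (p * n))
      (by linarith : (0:ℝ) ≤ (3/4)*δ) (hint _)
    have h2 : exp (-((3/4)*δ) * ((1+δ) * (p * n))) * mgf S P ((3/4)*δ)
        ≤ exp (-(3/8) * δ^2 * (p * n)) := by
      rw [hmgf]
      calc exp (-((3/4)*δ) * ((1+δ) * (p * n))) * (1 + p * (exp ((3/4)*δ) - 1)) ^ s.card
          ≤ exp (-((3/4)*δ) * ((1+δ) * (p * n))) * exp (n * (p * (exp ((3/4)*δ) - 1))) :=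
            mul_le_mul_of_nonneg_left (hpow _) (Real.exp_pos _).le
        _ = exp ((p * n) * (exp ((3/4)*δ) - 1 - (3/4)*δ*(1+δ))) := by
            rw [← Real.exp_add]; ring_nf
        _ ≤ exp (-(3/8) * δ^2 * (p * n)) := by
            apply Real.exp_le_exp.mpr
            have := tail_upper hδ0 hδ1
            nlinarith [mul_nonneg hp0 hn0]
    have := key.trans h2
    calc P {ω | (1+δ) * (p * n) ≤ S ω}
        = ENNReal.ofReal ((P {ω | (1+δ) * (p * n) ≤ S ω}).toReal) :=
          (ENNReal.ofReal_toReal (measure_ne_top _ _)).symm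
      _ ≤ ENNReal.ofReal (exp (-(3/8) * δ^2 * (p * n))) := ENNReal.ofReal_le_ofReal this
  · have key := measure_le_le_exp_mul_mgf (X := S) (μ := P) ((1-δ) * (p * n))
      (by linarith : -((3/4)*δ) ≤ 0) (hint _)
    have h2 : exp (-(-((3/4)*δ)) * ((1-δ) * (p * n))) * mgf S P (-((3/4)*δ))
        ≤ exp (-(3/8) * δ^2 * (p * n)) := by
      rw [hmgf]
      calc exp (-(-((3/4)*δ)) * ((1-δ) * (p * n))) * (1 + p * (exp (-((3/4)*δ)) - 1)) ^ s.card
          ≤ exp (-(-((3/4)*δ)) * ((1-δ) * (p * n))) * exp (n * (p * (exp (-((3/4)*δ)) - 1))) :=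
            mul_le_mul_of_nonneg_left (hpow _) (Real.exp_pos _).le
        _ = exp ((p * n) * (exp (-((3/4)*δ)) - 1 + (3/4)*δ*(1-δ))) := by
            rw [← Real.exp_add]; ring_nf
        _ ≤ exp (-(3/8) * δ^2 * (p * n)) := by
            apply Real.exp_le_exp.mpr
            have := tail_lower hδ0 hδ1
            nlinarith [mul_nonneg hp0 hn0]
    have := key.trans h2
    calc P {ω | S ω ≤ (1-δ) * (p * n)}
        = ENNReal.ofReal ((P {ω | S ω ≤ (1-δ) * (p * n)}).toReal) :=
          (ENNReal.ofReal_toReal (measure_ne_top _ _)).symm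
      _ ≤ ENNReal.ofReal (exp (-(3/8) * δ^2 * (p * n))) := ENNReal.ofReal_le_ofReal this
end


/-- Concentration of the number `Z` of (selfish, honest) key-block pairs among `m` i.i.d.
key blocks (`X i = 1` selfish w.p. `α`, `X i = 0` honest w.p. `β = 1-α`):
`P(|Z - αβ(m-1)| > δαβ(m-1)) ≤ 4·exp(-δ²αβ(m-1)/6)`. -/
theorem stmt1 {Ω : Type*} [MeasurableSpace Ω] (P : Measure Ω) [IsProbabilityMeasure P]
    (α β : ℝ) (hα0 : 0 < α) (hα1 : α < 1) (hβ : β = 1 - α)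
    (m : ℕ) (hm : 3 ≤ m)
    (X : ℕ → Ω → ℝ) (hmeas : ∀ i, Measurable (X i))
    (hindep : iIndepFun
      (fun i : Fin m => X (i + 1)) P)
    (h1 : ∀ i ∈ Finset.Icc 1 m, P {ω | X i ω = 1} = ENNReal.ofReal α)
    (h0 : ∀ i ∈ Finset.Icc 1 m, P {ω | X i ω = 0} = ENNReal.ofReal β)
    (Z : Ω → ℝ)
    (hZ : ∀ ω, Z ω = ∑ i ∈ Finset.Icc 1 (m - 1),
      if X i ω = 1 ∧ X (i + 1) ω = 0 then (1 : ℝ) else 0)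
    (δ : ℝ) (hδ0 : 0 < δ) (hδ1 : δ < 1) :
    P {ω | |Z ω - α * β * ((m : ℝ) - 1)| > δ * (α * β * ((m : ℝ) - 1))}
      ≤ ENNReal.ofReal (4 * exp (-δ ^ 2 * α * β * ((m : ℝ) - 1) / 6)) := by
  have hβ0 : 0 < β := by rw [hβ]; linarith
  set p : ℝ := α * β with hpdef
  have hp0 : 0 < p := mul_pos hα0 hβ0
  have hp4 : p ≤ 1/4 := by rw [hpdef, hβ]; nlinarith [sq_nonneg (α - 1/2)]
  have hδsq : 0 < δ^2 := pow_pos hδ0 2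
  -- trivial case
  by_cases hmbig : m ≤ 34
  · have hx : δ^2 * α * β * ((m:ℝ) - 1) ≤ 33/4 := by
      have hm33 : ((m:ℝ) - 1) ≤ 33 := by
        have : (m:ℝ) ≤ 34 := by exact_mod_cast hmbig
        linarith
      have h3 : δ^2 * α * β ≤ 1/4 := by nlinarith
      have hmm : (0:ℝ) ≤ (m:ℝ) - 1 := by
        have : (3:ℝ) ≤ (m:ℝ) := by exact_mod_cast hm
        linarith
      nlinarith
    have hlog : -(δ^2 * α * β * ((m:ℝ)-1)) / 6 ≥ -(2 * Real.log 2) := by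
      have := Real.log_two_gt_d9
      linarith
    have h4 : (1:ℝ) ≤ 4 * exp (-δ ^ 2 * α * β * ((m : ℝ) - 1) / 6) := by
      have he : exp (-(2 * Real.log 2)) = 1/4 := by
        rw [show (2 : ℝ) * Real.log 2 = Real.log 2 + Real.log 2 by ring, Real.exp_neg,
          Real.exp_add, Real.exp_log (by norm_num : (0:ℝ) < 2)]
        norm_num
      have := Real.exp_le_exp.mpr hlog
      rw [he] at this
      have heq : -δ ^ 2 * α * β * ((m : ℝ) - 1) / 6 = -(δ^2 * α * β * ((m:ℝ)-1)) / 6 := by ring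
      rw [heq]
      linarith
    calc P _ ≤ 1 := prob_le_one
      _ ≤ ENNReal.ofReal (4 * exp (-δ ^ 2 * α * β * ((m : ℝ) - 1) / 6)) := by
          rw [ENNReal.one_le_ofReal]; exact h4
  · push_neg at hmbig
    -- setup
    set A : ℕ → Set Ω := fun i => {ω | X i ω = 1 ∧ X (i+1) ω = 0} with hAdef
    have hA : ∀ i, MeasurableSet (A i) := by
      intro i
      have : A i = (X i ⁻¹' {1}) ∩ (X (i+1) ⁻¹' {0}) := by
        ext ω; simp [hAdef]
      rw [this]
      exact ((hmeas i) (measurableSet_singleton _)).inter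
        ((hmeas (i+1)) (measurableSet_singleton _))
    have ind_eq : ∀ i ω, (A i).indicator (fun _ => (1:ℝ)) ω
        = if X i ω = 1 ∧ X (i + 1) ω = 0 then (1:ℝ) else 0 := by
      intro i ω
      by_cases h : ω ∈ A i
      · rw [Set.indicator_of_mem h, if_pos (show X i ω = 1 ∧ X (i+1) ω = 0 from h)]
      · rw [Set.indicator_of_notMem h, if_neg (show ¬(X i ω = 1 ∧ X (i+1) ω = 0) from h)]
    -- product measure of intersections
    have hmeasT : ∀ (r : ℕ) (T : Finset ℕ), (∀ i ∈ T, 1 ≤ i ∧ i + 1 ≤ m ∧ i % 2 = r) →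
        P (⋂ i ∈ T, A i) = ENNReal.ofReal (p ^ T.card) := by
      intro r T hTm
      set B : ℕ → Set ℝ := fun j => if j ∈ T then {1} else {0} with hBdef
      have hB : ∀ j, MeasurableSet (B j) := by
        intro j
        by_cases h : j ∈ T
        · rw [hBdef]; simp only [if_pos h]; exact measurableSet_singleton _
        · rw [hBdef]; simp only [if_neg h]; exact measurableSet_singleton _
      set C : Finset ℕ := T ∪ T.image (· + 1) with hCdef
      have hdisj : ∀ j, j ∈ T.image (· + 1) → j ∉ T := by
        intro j hj hjT
        obtain ⟨i, hi, rfl⟩ := Finset.mem_image.mp hj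
        have h1' := (hTm i hi).2.2
        have h2' := (hTm _ hjT).2.2
        omega
      have hC : ∀ j ∈ C, 1 ≤ j ∧ j ≤ m := by
        intro j hj
        rcases Finset.mem_union.mp hj with h | h
        · have := hTm j h; omega
        · obtain ⟨i, hi, rfl⟩ := Finset.mem_image.mp h
          have := hTm i hi; omega
      have hset : (⋂ i ∈ T, A i) = ⋂ j ∈ C, X j ⁻¹' B j := by
        ext ω
        simp only [Set.mem_iInter, hCdef, Finset.mem_union, Finset.mem_image, hAdef,
          Set.mem_setOf_eq, Set.mem_preimage]
        constructor
        · intro h j hj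
          rcases hj with hj | ⟨i, hi, rfl⟩
          · rw [hBdef]; simp only [if_pos hj]
            exact Set.mem_singleton_iff.mpr (h j hj).1
          · rw [hBdef]
            simp only [if_neg (hdisj _ (Finset.mem_image.mpr ⟨i, hi, rfl⟩))]
            exact Set.mem_singleton_iff.mpr (h i hi).2
        · intro h i hi
          constructor
          · have := h i (Or.inl hi)
            rw [hBdef] at this; simp only [if_pos hi] at this
            exact Set.mem_singleton_iff.mp this
          · have := h (i+1) (Or.inr ⟨i, hi, rfl⟩)
            rw [hBdef] at this
            simp only [if_neg (hdisj _ (Finset.mem_image.mpr ⟨i, hi, rfl⟩))] at this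
            exact Set.mem_singleton_iff.mp this
      rw [hset, bridge P m X hindep C hC B hB]
      have hdisj2 : Disjoint T (T.image (· + 1)) := by
        rw [Finset.disjoint_right]
        exact fun j hj => hdisj j hj
      rw [hCdef, Finset.prod_union hdisj2]
      have hprod1 : (∏ j ∈ T, P (X j ⁻¹' B j)) = (ENNReal.ofReal α) ^ T.card := by
        rw [← Finset.prod_const]
        refine Finset.prod_congr rfl fun j hj => ?_
        rw [hBdef]; simp only [if_pos hj]
        have : X j ⁻¹' {1} = {ω | X j ω = 1} := by ext ω; simp
        rw [this]
        exact h1 j (Finset.mem_Icc.mpr ⟨(hTm j hj).1, by have := hTm j hj; omega⟩)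
      have hprod2 : (∏ j ∈ T.image (· + 1), P (X j ⁻¹' B j)) = (ENNReal.ofReal β) ^ T.card := by
        rw [Finset.prod_image (fun a _ b _ h => by omega)]
        rw [← Finset.prod_const]
        refine Finset.prod_congr rfl fun j hj => ?_
        rw [hBdef]
        simp only [if_neg (hdisj _ (Finset.mem_image.mpr ⟨j, hj, rfl⟩))]
        have : X (j+1) ⁻¹' {0} = {ω | X (j+1) ω = 0} := by ext ω; simp
        rw [this]
        exact h0 (j+1) (Finset.mem_Icc.mpr ⟨by omega, (hTm j hj).2.1⟩)
      rw [hprod1, hprod2, ← mul_pow, ← ENNReal.ofReal_mul hα0.le,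
        ← ENNReal.ofReal_pow (by positivity)]
    -- halves
    set O : Finset ℕ := (Finset.Icc 1 (m-1)).filter (fun i => i % 2 = 1) with hOdef
    set E : Finset ℕ := (Finset.Icc 1 (m-1)).filter (fun i => i % 2 = 0) with hEdef
    have hOm : ∀ i ∈ O, 1 ≤ i ∧ i + 1 ≤ m ∧ i % 2 = 1 := by
      intro i hi
      rw [hOdef, Finset.mem_filter, Finset.mem_Icc] at hi
      omega
    have hEm : ∀ i ∈ E, 1 ≤ i ∧ i + 1 ≤ m ∧ i % 2 = 0 := by
      intro i hi
      rw [hEdef, Finset.mem_filter, Finset.mem_Icc] at hi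
      omega
    have hcardO : O.card = m / 2 := by
      rw [hOdef, count_parity 1 (by norm_num) (m-1)]; omega
    have hcardE : E.card = (m-1) / 2 := by
      rw [hEdef, count_parity 0 (by norm_num) (m-1)]; omega
    have hZsplit : ∀ ω, Z ω = (∑ i ∈ O, (A i).indicator (fun _ => (1:ℝ)) ω)
        + (∑ i ∈ E, (A i).indicator (fun _ => (1:ℝ)) ω) := by
      intro ω
      rw [hZ ω]
      have hfil : (Finset.Icc 1 (m-1)).filter (fun i => ¬ (i % 2 = 1)) = E := by
        rw [hEdef]
        exact Finset.filter_congr fun i _ => by omega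
      rw [← Finset.sum_filter_add_sum_filter_not (Finset.Icc 1 (m-1)) (fun i => i % 2 = 1), hfil]
      rw [← hOdef]
      congr 1 <;> exact Finset.sum_congr rfl fun i _ => (ind_eq i _).symm
    -- half tail bounds
    have hbO := half_bound P A hA p hp0.le (by linarith) O
      (fun T hT => hmeasT 1 T (fun i hi => hOm i (hT hi))) δ hδ0 hδ1
    have hbE := half_bound P A hA p hp0.le (by linarith) E
      (fun T hT => hmeasT 0 T (fun i hi => hEm i (hT hi))) δ hδ0 hδ1
    -- final exponent comparisons
    have hcast : ((O.card : ℝ)) + (E.card : ℝ) = (m:ℝ) - 1 := by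
      have : O.card + E.card = m - 1 := by omega
      have h2 : ((m - 1 : ℕ) : ℝ) = (m:ℝ) - 1 := by
        have : (1:ℕ) ≤ m := by omega
        push_cast [Nat.cast_sub this]
        ring
      calc ((O.card : ℝ)) + (E.card : ℝ) = ((O.card + E.card : ℕ) : ℝ) := by push_cast; ring
        _ = (m:ℝ) - 1 := by rw [this, h2]
    have hexpO : exp (-(3/8) * δ^2 * (p * O.card)) ≤ exp (-δ ^ 2 * α * β * ((m : ℝ) - 1) / 6) := by
      apply Real.exp_le_exp.mpr
      have h9 : 9 * (m/2) ≥ 4 * (m - 1) := by omega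
      have h9' : (9:ℝ) * (O.card : ℝ) ≥ 4 * ((m:ℝ) - 1) := by
        rw [hcardO]
        have := (Nat.cast_le (α := ℝ)).mpr h9
        push_cast at this ⊢
        have h2 : ((m - 1 : ℕ) : ℝ) = (m:ℝ) - 1 := by
          have : (1:ℕ) ≤ m := by omega
          push_cast [Nat.cast_sub this]; ring
        rw [h2] at this
        linarith
      have hps : 0 ≤ δ^2 * p := by positivity
      rw [hpdef]
      nlinarith [mul_le_mul_of_nonneg_left h9' hps]
    have hexpE : exp (-(3/8) * δ^2 * (p * E.card)) ≤ exp (-δ ^ 2 * α * β * ((m : ℝ) - 1) / 6) := by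
      apply Real.exp_le_exp.mpr
      have h9 : 9 * ((m-1)/2) ≥ 4 * (m - 1) := by omega
      have h9' : (9:ℝ) * (E.card : ℝ) ≥ 4 * ((m:ℝ) - 1) := by
        rw [hcardE]
        have := (Nat.cast_le (α := ℝ)).mpr h9
        push_cast at this ⊢
        have h2 : ((m - 1 : ℕ) : ℝ) = (m:ℝ) - 1 := by
          have : (1:ℕ) ≤ m := by omega
          push_cast [Nat.cast_sub this]; ring
        rw [h2] at this
        linarith
      have hps : 0 ≤ δ^2 * p := by positivity
      rw [hpdef]
      nlinarith [mul_le_mul_of_nonneg_left h9' hps]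
    -- event inclusion
    set SO : Ω → ℝ := fun ω => ∑ i ∈ O, (A i).indicator (fun _ => (1:ℝ)) ω with hSO
    set SE : Ω → ℝ := fun ω => ∑ i ∈ E, (A i).indicator (fun _ => (1:ℝ)) ω with hSE
    have hincl : {ω | |Z ω - α * β * ((m : ℝ) - 1)| > δ * (α * β * ((m : ℝ) - 1))}
        ⊆ ({ω | (1+δ) * (p * O.card) ≤ SO ω} ∪ {ω | SO ω ≤ (1-δ) * (p * O.card)})
          ∪ ({ω | (1+δ) * (p * E.card) ≤ SE ω} ∪ {ω | SE ω ≤ (1-δ) * (p * E.card)}) := by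
      intro ω hω
      simp only [Set.mem_setOf_eq] at hω
      by_contra hc
      simp only [Set.mem_union, Set.mem_setOf_eq, not_or, not_le] at hc
      obtain ⟨⟨hc1, hc2⟩, hc3, hc4⟩ := hc
      have hzz := hZsplit ω
      have hmu : α * β * ((m:ℝ) - 1) = p * O.card + p * E.card := by
        rw [hpdef]; rw [← hcast]; ring
      rw [hmu] at hω
      rcases abs_cases (Z ω - (p * O.card + p * E.card)) with ⟨he, _⟩ | ⟨he, _⟩ <;>
        (rw [he] at hω; rw [hzz] at hω; simp only [hSO, hSE] at hc1 hc2 hc3 hc4 ⊢; linarith)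
    -- union bound
    set e : ℝ := exp (-δ ^ 2 * α * β * ((m : ℝ) - 1) / 6) with hedef
    have he0 : 0 ≤ e := (Real.exp_pos _).le
    have hb1 : P {ω | (1+δ) * (p * O.card) ≤ SO ω} ≤ ENNReal.ofReal e :=
      hbO.1.trans (ENNReal.ofReal_le_ofReal hexpO)
    have hb2 : P {ω | SO ω ≤ (1-δ) * (p * O.card)} ≤ ENNReal.ofReal e :=
      hbO.2.trans (ENNReal.ofReal_le_ofReal hexpO)
    have hb3 : P {ω | (1+δ) * (p * E.card) ≤ SE ω} ≤ ENNReal.ofReal e :=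
      hbE.1.trans (ENNReal.ofReal_le_ofReal hexpE)
    have hb4 : P {ω | SE ω ≤ (1-δ) * (p * E.card)} ≤ ENNReal.ofReal e :=
      hbE.2.trans (ENNReal.ofReal_le_ofReal hexpE)
    calc P {ω | |Z ω - α * β * ((m : ℝ) - 1)| > δ * (α * β * ((m : ℝ) - 1))}
        ≤ P (({ω | (1+δ) * (p * O.card) ≤ SO ω} ∪ {ω | SO ω ≤ (1-δ) * (p * O.card)})
          ∪ ({ω | (1+δ) * (p * E.card) ≤ SE ω} ∪ {ω | SE ω ≤ (1-δ) * (p * E.card)})) :=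
          measure_mono hincl
      _ ≤ P ({ω | (1+δ) * (p * O.card) ≤ SO ω} ∪ {ω | SO ω ≤ (1-δ) * (p * O.card)})
          + P ({ω | (1+δ) * (p * E.card) ≤ SE ω} ∪ {ω | SE ω ≤ (1-δ) * (p * E.card)}) :=
          measure_union_le _ _
      _ ≤ (P {ω | (1+δ) * (p * O.card) ≤ SO ω} + P {ω | SO ω ≤ (1-δ) * (p * O.card)})
          + (P {ω | (1+δ) * (p * E.card) ≤ SE ω} + P {ω | SE ω ≤ (1-δ) * (p * E.card)}) :=
          add_le_add (measure_union_le _ _) (measure_union_le _ _)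
      _ ≤ (ENNReal.ofReal e + ENNReal.ofReal e) + (ENNReal.ofReal e + ENNReal.ofReal e) :=
          add_le_add (add_le_add hb1 hb2) (add_le_add hb3 hb4)
      _ = ENNReal.ofReal (4 * e) := by
          rw [← ENNReal.ofReal_add he0 he0, ← ENNReal.ofReal_add (by linarith) (by linarith)]
          congr 1
          ring
end

section
/- Let α ∈ (0,1) and β = 1−α. Let X_1, …, X_m (m ≥ 3) be i.i.d. random variables on a probability space with P(X_i = 1) = α and P(X_i = 0) = β. For i ∈ {1, …, m−1} define K_i = 1 if (X_i, X_{i+1}) = (0,1) and K_i = 0 otherwise, and let K = Σ_{i=1}^{m−1} K_i. Then for every δ with 0 < δ < 1, P( |K − αβ(m−1)| > δ αβ(m−1) ) ≤ 4 · exp( −δ² αβ (m−1) / 6 ). -/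
open MeasureTheory ProbabilityTheory Real Finset

lemma chord_log {x : ℝ} (h0 : 0 ≤ x) (h1 : x ≤ 1) : x * Real.log 2 ≤ Real.log (1 + x) := by
  have h := strictConcaveOn_log_Ioi.concaveOn.2 (show (1:ℝ) ∈ Set.Ioi 0 by norm_num)
    (show (2:ℝ) ∈ Set.Ioi 0 by norm_num) (show (0:ℝ) ≤ 1 - x by linarith) h0
    (show (1 - x) + x = 1 by ring)
  have h2 : (1 - x) * Real.log 1 + x * Real.log 2 ≤ Real.log ((1 - x) * 1 + x * 2) := by
    simpa [smul_eq_mul] using h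
  have heq : (1 - x) * 1 + x * 2 = 1 + x := by ring
  rw [heq, Real.log_one] at h2
  linarith

lemma log_ineq1 {δ : ℝ} (h0 : 0 ≤ δ) (h1 : δ ≤ 1) :
    δ + δ ^ 2 / 3 ≤ (1 + δ) * Real.log (1 + δ) := by
  set F : ℝ → ℝ := fun x => (1 + x) * Real.log (1 + x) - x - x ^ 2 / 3 with hF
  have hd : ∀ x ∈ Set.Ioo (0:ℝ) 1, HasDerivAt F (Real.log (1 + x) - 2 * x / 3) x := by
    intro x hx
    have hx0 : (0:ℝ) < 1 + x := by linarith [hx.1]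
    have h1' : HasDerivAt (fun y : ℝ => 1 + y) 1 x := (hasDerivAt_id x).const_add 1
    have hlog : HasDerivAt (fun y : ℝ => Real.log (1 + y)) (1 / (1 + x)) x := by
      simpa using h1'.log hx0.ne'
    have hmul := h1'.mul hlog
    have hsq : HasDerivAt (fun y : ℝ => y ^ 2 / 3) (2 * x / 3) x := by
      simpa using (hasDerivAt_pow 2 x).div_const 3
    have := (hmul.sub (hasDerivAt_id x)).sub hsq
    refine this.congr_deriv ?_
    rw [mul_one_div_cancel hx0.ne']; ring
  have hmono : MonotoneOn F (Set.Icc 0 1) := by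
    apply monotoneOn_of_deriv_nonneg (convex_Icc 0 1)
    · intro x hx
      have hx0 : (0:ℝ) < 1 + x := by linarith [hx.1]
      apply ContinuousAt.continuousWithinAt
      have : ContinuousAt (fun y : ℝ => Real.log (1 + y)) x :=
        (Real.continuousAt_log hx0.ne').comp (by fun_prop)
      fun_prop
    · intro x hx
      rw [interior_Icc] at hx
      exact ((hd x hx).differentiableAt).differentiableWithinAt
    · intro x hx
      rw [interior_Icc] at hx
      rw [(hd x hx).deriv]
      have := chord_log hx.1.le hx.2.le
      have hl2 : (0.6931471803 : ℝ) < Real.log 2 := Real.log_two_gt_d9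
      nlinarith [hx.1.le]
  have h00 : F 0 = 0 := by simp [hF]
  have := hmono (Set.mem_Icc.2 ⟨le_refl 0, by norm_num⟩) (Set.mem_Icc.2 ⟨h0, h1⟩) h0
  rw [h00] at this
  simp only [hF] at this
  linarith

lemma log_ineq2 {δ : ℝ} (h0 : 0 ≤ δ) (h1 : δ < 1) :
    δ ^ 2 / 3 - δ ≤ (1 - δ) * Real.log (1 - δ) := by
  set G : ℝ → ℝ := fun x => (1 - x) * Real.log (1 - x) + x - x ^ 2 / 3 with hG
  have hd : ∀ x ∈ Set.Ioo (0:ℝ) δ, HasDerivAt G (-Real.log (1 - x) - 2 * x / 3) x := by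
    intro x hx
    have hx0 : (0:ℝ) < 1 - x := by linarith [hx.2]
    have h1' : HasDerivAt (fun y : ℝ => 1 - y) (-1) x := by
      simpa using (hasDerivAt_id x).const_sub 1
    have hlog : HasDerivAt (fun y : ℝ => Real.log (1 - y)) (-1 / (1 - x)) x := by
      simpa using h1'.log hx0.ne'
    have hmul := h1'.mul hlog
    have hsq : HasDerivAt (fun y : ℝ => y ^ 2 / 3) (2 * x / 3) x := by
      simpa using (hasDerivAt_pow 2 x).div_const 3
    have := (hmul.add (hasDerivAt_id x)).sub hsq
    refine this.congr_deriv ?_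
    rw [mul_comm (1 - x) (-1 / (1 - x)), div_mul_cancel₀ _ hx0.ne']; ring
  have hmono : MonotoneOn G (Set.Icc 0 δ) := by
    apply monotoneOn_of_deriv_nonneg (convex_Icc 0 δ)
    · intro x hx
      have hx0 : (0:ℝ) < 1 - x := by linarith [hx.2, h1]
      apply ContinuousAt.continuousWithinAt
      have : ContinuousAt (fun y : ℝ => Real.log (1 - y)) x :=
        (Real.continuousAt_log hx0.ne').comp (by fun_prop)
      fun_prop
    · intro x hx
      rw [interior_Icc] at hx
      exact ((hd x hx).differentiableAt).differentiableWithinAt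
    · intro x hx
      rw [interior_Icc] at hx
      rw [(hd x hx).deriv]
      have hx0 : (0:ℝ) < 1 - x := by linarith [hx.2, h1]
      have := Real.log_le_sub_one_of_pos hx0
      nlinarith [hx.1.le]
  have h00 : G 0 = 0 := by simp [hG]
  have := hmono (Set.mem_Icc.2 ⟨le_refl 0, h0⟩) (Set.mem_Icc.2 ⟨h0, le_refl δ⟩) h0
  rw [h00] at this
  simp only [hG] at this
  linarith

lemma integral_exp_ite {Ω : Type*} [MeasurableSpace Ω] (P : Measure Ω) [IsProbabilityMeasure P]
    (t : ℝ) (p : Ω → Prop) [DecidablePred p] (hA : MeasurableSet {ω | p ω}) :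
    ∫ ω, Real.exp (t * (if p ω then (1:ℝ) else 0)) ∂P
      = 1 + (Real.exp t - 1) * (P {ω | p ω}).toReal := by
  have h : (fun ω => Real.exp (t * (if p ω then (1:ℝ) else 0)))
      = fun ω => Set.indicator {ω | p ω} (fun _ => Real.exp t - 1) ω + 1 := by
    funext ω
    by_cases h : p ω
    · simp [Set.indicator, h]
    · simp [Set.indicator, h]
  rw [h, integral_add ((integrable_const _).indicator hA) (integrable_const 1),
      integral_indicator_const _ hA, integral_const]
  simp only [measureReal_def, measure_univ, ENNReal.toReal_one, smul_eq_mul, one_smul]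
  ring

lemma aux_mgf_prod {Ω : Type*} [MeasurableSpace Ω] {P : Measure Ω} [IsProbabilityMeasure P]
    {m : ℕ} {f : Fin m → Ω → ℝ} (hf : ∀ i, Measurable (f i))
    (hindep : iIndepFun f P)
    (t : ℝ) (a b : ℕ → Fin m) (F : Finset ℕ)
    (hdisj : ∀ i ∈ F, ∀ j ∈ F, i ≠ j → a i ≠ a j ∧ a i ≠ b j ∧ b i ≠ a j ∧ b i ≠ b j) :
    ∫ ω, Real.exp (t * ∑ i ∈ F, (if f (a i) ω = 0 ∧ f (b i) ω = 1 then (1:ℝ) else 0)) ∂P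
      = ∏ i ∈ F, ∫ ω, Real.exp (t * (if f (a i) ω = 0 ∧ f (b i) ω = 1 then (1:ℝ) else 0)) ∂P := by
  classical
  induction F using Finset.induction_on with
  | empty => simp
  | @insert j F hj ih =>
    have hdisj' : ∀ i ∈ F, ∀ j ∈ F, i ≠ j → a i ≠ a j ∧ a i ≠ b j ∧ b i ≠ a j ∧ b i ≠ b j :=
      fun i hi k hk => hdisj i (mem_insert_of_mem hi) k (mem_insert_of_mem hk)
    set Yj : Ω → ℝ := fun ω => if f (a j) ω = 0 ∧ f (b j) ω = 1 then (1:ℝ) else 0 with hYjdef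
    set Sf : Ω → ℝ := fun ω => ∑ i ∈ F, (if f (a i) ω = 0 ∧ f (b i) ω = 1 then (1:ℝ) else 0)
      with hSfdef
    have hAmeas : ∀ u v : Fin m, MeasurableSet {ω | f u ω = 0 ∧ f v ω = 1} :=
      fun u v => ((hf u) (measurableSet_singleton 0)).inter ((hf v) (measurableSet_singleton 1))
    have hYjm : Measurable Yj := Measurable.ite (hAmeas (a j) (b j))
      measurable_const measurable_const
    have hSfm : Measurable Sf := Finset.measurable_sum _ fun i _ =>
      Measurable.ite (hAmeas (a i) (b i)) measurable_const measurable_const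
    -- independence of Yj and Sf
    set S : Finset (Fin m) := {a j, b j} with hSdef
    set T : Finset (Fin m) := F.biUnion (fun i => {a i, b i}) with hTdef
    have hST : Disjoint S T := by
      rw [Finset.disjoint_left]
      intro c hcS hcT
      obtain ⟨i, hiF, hci⟩ := Finset.mem_biUnion.1 hcT
      have hij : j ≠ i := fun h => hj (h ▸ hiF)
      have h4 := hdisj j (mem_insert_self _ _) i (mem_insert_of_mem hiF) hij
      simp only [hSdef, Finset.mem_insert, Finset.mem_singleton] at hcS hci
      rcases hcS with rfl | rfl <;> rcases hci with h' | h' <;> tauto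
    have hIF := hindep.indepFun_finset S T hST hf
    have haS : a j ∈ S := mem_insert_self _ _
    have hbS : b j ∈ S := mem_insert_of_mem (mem_singleton_self _)
    set φ : ((i : S) → ℝ) → ℝ :=
      fun v => if v ⟨a j, haS⟩ = 0 ∧ v ⟨b j, hbS⟩ = 1 then (1:ℝ) else 0 with hφdef
    have hφ : Measurable φ := Measurable.ite
      ((((measurableSet_singleton (0:ℝ)).preimage (measurable_pi_apply _))).inter
        (((measurableSet_singleton (1:ℝ)).preimage (measurable_pi_apply _)))) measurable_const
      measurable_const
    have haT : ∀ i : F, a i.1 ∈ T := fun i => Finset.mem_biUnion.2 ⟨i.1, i.2, by simp⟩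
    have hbT : ∀ i : F, b i.1 ∈ T := fun i => Finset.mem_biUnion.2 ⟨i.1, i.2, by simp⟩
    set ψ : ((i : T) → ℝ) → ℝ :=
      fun v => ∑ i ∈ F.attach,
        (if v ⟨a i.1, haT i⟩ = 0 ∧ v ⟨b i.1, hbT i⟩ = 1 then (1:ℝ) else 0) with hψdef
    have hψ : Measurable ψ := Finset.measurable_sum _ fun i _ => Measurable.ite
      ((((measurableSet_singleton (0:ℝ)).preimage (measurable_pi_apply _))).inter
        (((measurableSet_singleton (1:ℝ)).preimage (measurable_pi_apply _)))) measurable_const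
      measurable_const
    have hcomp := hIF.comp hφ hψ
    have heq1 : (φ ∘ fun ω (i : S) => f i ω) = Yj := rfl
    have heq2 : (ψ ∘ fun ω (i : T) => f i ω) = Sf := by
      funext ω
      exact Finset.sum_attach F fun i => if f (a i) ω = 0 ∧ f (b i) ω = 1 then (1:ℝ) else 0
    rw [heq1, heq2] at hcomp
    have hkey : IndepFun (fun ω => Real.exp (t * Yj ω)) (fun ω => Real.exp (t * Sf ω)) P :=
      hcomp.comp ((measurable_id.const_mul t).exp) ((measurable_id.const_mul t).exp)
    simp only [Finset.sum_insert hj, Finset.prod_insert hj]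
    have hsplit : (fun ω => Real.exp (t * (Yj ω + Sf ω)))
        = fun ω => Real.exp (t * Yj ω) * Real.exp (t * Sf ω) := by
      funext ω; rw [mul_add, Real.exp_add]
    calc ∫ ω, Real.exp (t * (Yj ω + Sf ω)) ∂P
        = ∫ ω, Real.exp (t * Yj ω) * Real.exp (t * Sf ω) ∂P := by rw [hsplit]
      _ = (∫ ω, Real.exp (t * Yj ω) ∂P) * ∫ ω, Real.exp (t * Sf ω) ∂P :=
          hkey.integral_fun_mul_eq_mul_integral (((hYjm.const_mul t).exp).aestronglyMeasurable)
            (((hSfm.const_mul t).exp).aestronglyMeasurable)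
      _ = (∫ ω, Real.exp (t * Yj ω) ∂P) *
            ∏ i ∈ F, ∫ ω, Real.exp (t * (if f (a i) ω = 0 ∧ f (b i) ω = 1 then (1:ℝ) else 0)) ∂P
          := by rw [ih hdisj']

set_option maxHeartbeats 2000000 in
/-- Concentration of the number `K` of (honest, selfish) key-block pairs among `m` i.i.d.
key blocks (`X i = 1` selfish w.p. `α`, `X i = 0` honest w.p. `β = 1-α`):
`P(|K - αβ(m-1)| > δαβ(m-1)) ≤ 4·exp(-δ²αβ(m-1)/6)`. -/
theorem stmt2 {Ω : Type*} [MeasurableSpace Ω] (P : Measure Ω) [IsProbabilityMeasure P]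
    (α β : ℝ) (hα0 : 0 < α) (hα1 : α < 1) (hβ : β = 1 - α)
    (m : ℕ) (hm : 3 ≤ m)
    (X : ℕ → Ω → ℝ) (hmeas : ∀ i, Measurable (X i))
    (hindep : iIndepFun
      (fun i : Fin m => X (i + 1)) P)
    (h1 : ∀ i ∈ Finset.Icc 1 m, P {ω | X i ω = 1} = ENNReal.ofReal α)
    (h0 : ∀ i ∈ Finset.Icc 1 m, P {ω | X i ω = 0} = ENNReal.ofReal β)
    (K : Ω → ℝ)
    (hK : ∀ ω, K ω = ∑ i ∈ Finset.Icc 1 (m - 1),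
      if X i ω = 0 ∧ X (i + 1) ω = 1 then (1 : ℝ) else 0)
    (δ : ℝ) (hδ0 : 0 < δ) (hδ1 : δ < 1) :
    P {ω | |K ω - α * β * ((m : ℝ) - 1)| > δ * (α * β * ((m : ℝ) - 1))}
      ≤ ENNReal.ofReal (4 * exp (-δ ^ 2 * α * β * ((m : ℝ) - 1) / 6)) := by
  classical
  have hβ0 : 0 < β := by rw [hβ]; linarith
  set n : ℕ := m - 1 with hn
  have hn2 : 2 ≤ n := by omega
  set N : ℝ := (m : ℝ) - 1 with hN
  set p : ℝ := α * β with hp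
  have hNn : (n : ℝ) = N := by
    rw [hN, hn]; push_cast [Nat.cast_sub (by omega : 1 ≤ m)]; ring
  have hN2 : 2 ≤ N := by rw [← hNn]; exact_mod_cast hn2
  have hN0 : 0 < N := by linarith
  have hp0 : 0 < p := mul_pos hα0 hβ0
  have hp4 : p ≤ 1/4 := by rw [hp, hβ]; nlinarith [sq_nonneg (2*α - 1)]
  set f : Fin m → Ω → ℝ := fun i => X (i + 1) with hf
  have hfm : ∀ i, Measurable (f i) := fun i => hmeas _
  have hm0 : 0 < m := by omega
  set a : ℕ → Fin m := fun i => ⟨(i - 1) % m, Nat.mod_lt _ hm0⟩ with ha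
  set b : ℕ → Fin m := fun i => ⟨i % m, Nat.mod_lt _ hm0⟩ with hb
  have hfa : ∀ i, 1 ≤ i → i ≤ n → f (a i) = X i := by
    intro i hi1 hi2
    show X ((i - 1) % m + 1) = X i
    rw [Nat.mod_eq_of_lt (show i - 1 < m by omega), show i - 1 + 1 = i by omega]
  have hfb : ∀ i, i ≤ n → f (b i) = X (i + 1) := by
    intro i hi
    show X (i % m + 1) = X (i + 1)
    rw [Nat.mod_eq_of_lt (show i < m by omega)]
  set ind : ℕ → Ω → ℝ := fun i ω => if X i ω = 0 ∧ X (i+1) ω = 1 then (1:ℝ) else 0 with hind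
  have hind_meas : ∀ i, Measurable (ind i) := fun i => Measurable.ite
    (((hmeas i) (measurableSet_singleton 0)).inter ((hmeas (i+1)) (measurableSet_singleton 1)))
    measurable_const measurable_const
  have hKeq : K = fun ω => ∑ i ∈ Icc 1 n, ind i ω := by funext ω; rw [hK]
  -- blocks disjointness
  have hblocks : ∀ i ∈ Icc 1 n, ∀ j ∈ Icc 1 n, i % 2 = j % 2 → i ≠ j →
      a i ≠ a j ∧ a i ≠ b j ∧ b i ≠ a j ∧ b i ≠ b j := by
    intro i hi j hj hpar hij
    simp only [mem_Icc] at hi hj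
    have e1 : (i - 1) % m = i - 1 := Nat.mod_eq_of_lt (by omega)
    have e2 : (j - 1) % m = j - 1 := Nat.mod_eq_of_lt (by omega)
    have e3 : i % m = i := Nat.mod_eq_of_lt (by omega)
    have e4 : j % m = j := Nat.mod_eq_of_lt (by omega)
    refine ⟨?_, ?_, ?_, ?_⟩ <;>
      · intro h
        have hv := congrArg Fin.val h
        simp only [ha, hb, e1, e2, e3, e4] at hv
        omega
  -- pair probability
  have hPA : ∀ i ∈ Icc 1 n, P {ω | X i ω = 0 ∧ X (i+1) ω = 1} = ENNReal.ofReal p := by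
    intro i hi
    simp only [mem_Icc] at hi
    have hne : a i ≠ b i := by
      intro h
      have hv := congrArg Fin.val h
      simp only [ha, hb, Nat.mod_eq_of_lt (show i - 1 < m by omega),
        Nat.mod_eq_of_lt (show i < m by omega)] at hv
      omega
    have hIP : IndepFun (f (a i)) (f (b i)) P := hindep.indepFun hne
    rw [hfa i hi.1 hi.2, hfb i hi.2] at hIP
    have hmi := hIP.meas_inter (s := X i ⁻¹' {0}) (t := X (i+1) ⁻¹' {1})
      ⟨{0}, measurableSet_singleton 0, rfl⟩ ⟨{1}, measurableSet_singleton 1, rfl⟩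
    have hset : {ω | X i ω = 0 ∧ X (i+1) ω = 1} = X i ⁻¹' {0} ∩ X (i+1) ⁻¹' {1} := rfl
    rw [hset, hmi, show X i ⁻¹' ({0} : Set ℝ) = {ω | X i ω = 0} from rfl,
        show X (i+1) ⁻¹' ({1} : Set ℝ) = {ω | X (i+1) ω = 1} from rfl, h0 i (mem_Icc.2 ⟨by omega, by omega⟩),
        h1 (i+1) (mem_Icc.2 ⟨by omega, by omega⟩), ← ENNReal.ofReal_mul hβ0.le]
    rw [hp, mul_comm]
  -- single mgf
  have hsingle : ∀ (t : ℝ), ∀ i ∈ Icc 1 n,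
      ∫ ω, Real.exp (t * ind i ω) ∂P = 1 + (Real.exp t - 1) * p := by
    intro t i hi
    have := integral_exp_ite P t (fun ω => X i ω = 0 ∧ X (i+1) ω = 1)
      (((hmeas i) (measurableSet_singleton 0)).inter ((hmeas (i+1)) (measurableSet_singleton 1)))
    rw [hPA i hi, ENNReal.toReal_ofReal hp0.le] at this
    exact this
  -- product formula
  have hprod : ∀ (t : ℝ) (F : Finset ℕ), F ⊆ Icc 1 n →
      (∀ i ∈ F, ∀ j ∈ F, i % 2 = j % 2) →
      ∫ ω, Real.exp (t * ∑ i ∈ F, ind i ω) ∂P = (1 + (Real.exp t - 1) * p) ^ F.card := by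
    intro t F hsub hpar
    have hbl : ∀ i ∈ F, ∀ j ∈ F, i ≠ j → a i ≠ a j ∧ a i ≠ b j ∧ b i ≠ a j ∧ b i ≠ b j :=
      fun i hi j hj hij => hblocks i (hsub hi) j (hsub hj) (hpar i hi j hj) hij
    have heq : ∀ ω, ∑ i ∈ F, ind i ω
        = ∑ i ∈ F, (if f (a i) ω = 0 ∧ f (b i) ω = 1 then (1:ℝ) else 0) := by
      intro ω
      refine Finset.sum_congr rfl fun i hi => ?_
      have hi' := mem_Icc.1 (hsub hi)
      rw [hfa i hi'.1 hi'.2, hfb i hi'.2]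
    calc ∫ ω, Real.exp (t * ∑ i ∈ F, ind i ω) ∂P
        = ∫ ω, Real.exp (t * ∑ i ∈ F, (if f (a i) ω = 0 ∧ f (b i) ω = 1 then (1:ℝ) else 0)) ∂P
          := by simp only [heq]
      _ = ∏ i ∈ F, ∫ ω, Real.exp (t * (if f (a i) ω = 0 ∧ f (b i) ω = 1 then (1:ℝ) else 0)) ∂P
          := aux_mgf_prod hfm hindep t a b F hbl
      _ = ∏ i ∈ F, (1 + (Real.exp t - 1) * p) := by
          refine Finset.prod_congr rfl fun i hi => ?_
          have hi' := mem_Icc.1 (hsub hi)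
          have heq2 : (fun ω => Real.exp (t * (if f (a i) ω = 0 ∧ f (b i) ω = 1
              then (1:ℝ) else 0))) = fun ω => Real.exp (t * ind i ω) := by
            funext ω; rw [hfa i hi'.1 hi'.2, hfb i hi'.2]
          rw [heq2]
          exact hsingle t i (hsub hi)
      _ = (1 + (Real.exp t - 1) * p) ^ F.card := Finset.prod_const _
  -- integrability
  have hsum_meas : ∀ (F : Finset ℕ), Measurable (fun ω => ∑ i ∈ F, ind i ω) :=
    fun F => Finset.measurable_sum _ fun i _ => hind_meas i
  have hind01 : ∀ i ω, 0 ≤ ind i ω ∧ ind i ω ≤ 1 := by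
    intro i ω; rw [hind]; dsimp only; split <;> norm_num
  have hsum_bdd : ∀ (F : Finset ℕ) ω, 0 ≤ (∑ i ∈ F, ind i ω) ∧ (∑ i ∈ F, ind i ω) ≤ F.card := by
    intro F ω
    constructor
    · exact Finset.sum_nonneg fun i _ => (hind01 i ω).1
    · calc (∑ i ∈ F, ind i ω) ≤ ∑ i ∈ F, 1 := Finset.sum_le_sum fun i _ => (hind01 i ω).2
        _ = F.card := by simp
  have hint : ∀ (t : ℝ) (F : Finset ℕ),
      Integrable (fun ω => Real.exp (t * ∑ i ∈ F, ind i ω)) P := by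
    intro t F
    refine Integrable.mono' (integrable_const (Real.exp (|t| * F.card)))
      (((hsum_meas F).const_mul t).exp).aestronglyMeasurable (ae_of_all _ fun ω => ?_)
    rw [Real.norm_eq_abs, Real.abs_exp]
    refine Real.exp_le_exp.2 ?_
    have h1' := (hsum_bdd F ω).1
    have h2' := (hsum_bdd F ω).2
    have := le_abs_self t
    have := neg_abs_le t
    nlinarith [abs_nonneg t]
  -- odd/even split
  set O : Finset ℕ := (Icc 1 n).filter (fun i => i % 2 = 1) with hO
  set E' : Finset ℕ := (Icc 1 n).filter (fun i => ¬ i % 2 = 1) with hE'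
  have hOE : ∀ ω, K ω = (∑ i ∈ O, ind i ω) + ∑ i ∈ E', ind i ω := by
    intro ω
    simp only [hKeq]
    exact (Finset.sum_filter_add_sum_filter_not (Icc 1 n) (fun i => i % 2 = 1) _).symm
  have hcard : O.card + E'.card = n := by
    rw [hO, hE', Finset.card_filter_add_card_filter_not, Nat.card_Icc]; omega
  have hOcard : 2 * O.card ≤ n + 1 := by
    have hsub : O ⊆ (Icc 1 ((n+1)/2)).image (fun k => 2*k - 1) := by
      intro i hi
      simp only [hO, mem_filter, mem_Icc] at hi
      simp only [Finset.mem_image, mem_Icc]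
      exact ⟨(i+1)/2, ⟨by omega, by omega⟩, by omega⟩
    calc 2 * O.card ≤ 2 * (Icc 1 ((n+1)/2)).card :=
          Nat.mul_le_mul_left 2 ((Finset.card_le_card hsub).trans Finset.card_image_le)
      _ = 2 * ((n+1)/2) := by rw [Nat.card_Icc]; omega
      _ ≤ n + 1 := by omega
  have hEcard : 2 * E'.card ≤ n + 1 := by
    have hsub : E' ⊆ (Icc 1 (n/2)).image (fun k => 2*k) := by
      intro i hi
      simp only [hE', mem_filter, mem_Icc] at hi
      simp only [Finset.mem_image, mem_Icc]
      exact ⟨i/2, ⟨by omega, by omega⟩, by omega⟩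
    calc 2 * E'.card ≤ 2 * (Icc 1 (n/2)).card :=
          Nat.mul_le_mul_left 2 ((Finset.card_le_card hsub).trans Finset.card_image_le)
      _ = 2 * (n/2) := by rw [Nat.card_Icc]; omega
      _ ≤ n + 1 := by omega
  have hoU : (O.card : ℝ) ≤ (N+1)/2 := by
    rw [← hNn]
    have : (2 * O.card : ℝ) ≤ (n:ℝ) + 1 := by exact_mod_cast hOcard
    linarith
  have heU : (E'.card : ℝ) ≤ (N+1)/2 := by
    rw [← hNn]
    have : (2 * E'.card : ℝ) ≤ (n:ℝ) + 1 := by exact_mod_cast hEcard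
    linarith
  have hoL : (N-1)/2 ≤ (O.card : ℝ) := by
    rw [← hNn]
    have h' : n ≤ 2 * O.card + 1 := by omega
    have : (n:ℝ) ≤ 2 * (O.card:ℝ) + 1 := by exact_mod_cast h'
    linarith
  have heL : (N-1)/2 ≤ (E'.card : ℝ) := by
    rw [← hNn]
    have h' : n ≤ 2 * E'.card + 1 := by omega
    have : (n:ℝ) ≤ 2 * (E'.card:ℝ) + 1 := by exact_mod_cast h'
    linarith
  have hOpar : ∀ i ∈ O, ∀ j ∈ O, i % 2 = j % 2 := by
    intro i hi j hj; simp only [hO, mem_filter] at hi hj; omega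
  have hEpar : ∀ i ∈ E', ∀ j ∈ E', i % 2 = j % 2 := by
    intro i hi j hj; simp only [hE', mem_filter] at hi hj; omega
  -- mgf bound
  have hmgfb : ∀ s : ℝ, (∫ ω, Real.exp (s * K ω) ∂P)
      ≤ ((1 + (Real.exp (2*s) - 1) * p) ^ O.card
          + (1 + (Real.exp (2*s) - 1) * p) ^ E'.card) / 2 := by
    intro s
    have hptw : ∀ ω, Real.exp (s * K ω)
        ≤ (Real.exp ((2*s) * ∑ i ∈ O, ind i ω) + Real.exp ((2*s) * ∑ i ∈ E', ind i ω)) / 2 := by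
      intro ω
      rw [hOE ω]
      set xo := ∑ i ∈ O, ind i ω
      set xe := ∑ i ∈ E', ind i ω
      have h1' : Real.exp (s * (xo + xe)) = Real.exp (s * xo) * Real.exp (s * xe) := by
        rw [← Real.exp_add]; ring_nf
      have h2' : Real.exp (2*s*xo) = Real.exp (s*xo)^2 := by
        rw [sq, ← Real.exp_add]; ring_nf
      have h3' : Real.exp (2*s*xe) = Real.exp (s*xe)^2 := by
        rw [sq, ← Real.exp_add]; ring_nf
      rw [h1', h2', h3']
      nlinarith [sq_nonneg (Real.exp (s*xo) - Real.exp (s*xe))]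
    have hi1 : Integrable (fun ω => Real.exp (s * K ω)) P := by
      simpa only [hKeq] using hint s (Icc 1 n)
    have hi2 : Integrable (fun ω => (Real.exp ((2*s) * ∑ i ∈ O, ind i ω)
        + Real.exp ((2*s) * ∑ i ∈ E', ind i ω)) / 2) P :=
      ((hint (2*s) O).add (hint (2*s) E')).div_const 2
    calc (∫ ω, Real.exp (s * K ω) ∂P)
        ≤ ∫ ω, (Real.exp ((2*s) * ∑ i ∈ O, ind i ω)
            + Real.exp ((2*s) * ∑ i ∈ E', ind i ω)) / 2 ∂P := integral_mono hi1 hi2 hptw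
      _ = ((∫ ω, Real.exp ((2*s) * ∑ i ∈ O, ind i ω) ∂P)
            + ∫ ω, Real.exp ((2*s) * ∑ i ∈ E', ind i ω) ∂P) / 2 := by
          rw [integral_div, integral_add (hint (2*s) O) (hint (2*s) E')]
      _ = ((1 + (Real.exp (2*s) - 1) * p) ^ O.card
            + (1 + (Real.exp (2*s) - 1) * p) ^ E'.card) / 2 := by
          rw [hprod (2*s) O (Finset.filter_subset _ _) hOpar,
              hprod (2*s) E' (Finset.filter_subset _ _) hEpar]
  -- upper tail
  have hdp0 : 0 ≤ δ * p := by positivity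
  have hup : (P {ω | (1+δ) * (p*N) ≤ K ω}).toReal
      ≤ Real.exp (p*δ/2) * Real.exp (-δ^2 * p * N / 6) := by
    set s1 : ℝ := Real.log (1+δ) / 2 with hs1
    have hs1nn : 0 ≤ s1 := div_nonneg (Real.log_nonneg (by linarith)) (by norm_num)
    have he2s1 : Real.exp (2 * s1) = 1 + δ := by
      rw [hs1, show 2 * (Real.log (1+δ)/2) = Real.log (1+δ) by ring]
      exact Real.exp_log (by linarith)
    have hb := measure_ge_le_exp_mul_mgf (X := K) (μ := P) (t := s1) ((1+δ)*(p*N)) hs1nn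
      (by simpa only [hKeq] using hint s1 (Icc 1 n))
    refine hb.trans ?_
    have hcle : ∀ (k : ℕ), (k:ℝ) ≤ (N+1)/2 →
        (1 + δ*p)^k ≤ Real.exp ((N+1)/2 * (δ*p)) := by
      intro k hk
      have h2' : (1 + δ*p) ≤ Real.exp (δ*p) := by
        have := Real.add_one_le_exp (δ*p); linarith
      calc (1 + δ*p)^k ≤ (Real.exp (δ*p))^k := pow_le_pow_left₀ (by linarith) h2' k
        _ = Real.exp (k * (δ*p)) := (Real.exp_nat_mul _ k).symm
        _ ≤ Real.exp ((N+1)/2 * (δ*p)) :=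
            Real.exp_le_exp.2 (mul_le_mul_of_nonneg_right hk hdp0)
    have hmgf1 : mgf K P s1 ≤ Real.exp ((N+1)/2 * (δ*p)) := by
      have h2 := hmgfb s1
      have hc : 1 + (Real.exp (2*s1) - 1) * p = 1 + δ*p := by rw [he2s1]; ring
      rw [hc] at h2
      have ho' := hcle O.card hoU
      have he' := hcle E'.card heU
      calc mgf K P s1 = ∫ ω, Real.exp (s1 * K ω) ∂P := rfl
        _ ≤ ((1 + δ*p) ^ O.card + (1 + δ*p) ^ E'.card) / 2 := h2
        _ ≤ Real.exp ((N+1)/2 * (δ*p)) := by linarith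
    calc Real.exp (-s1*((1+δ)*(p*N))) * mgf K P s1
        ≤ Real.exp (-s1*((1+δ)*(p*N))) * Real.exp ((N+1)/2 * (δ*p)) :=
          mul_le_mul_of_nonneg_left hmgf1 (Real.exp_nonneg _)
      _ = Real.exp (-s1*((1+δ)*(p*N)) + (N+1)/2*(δ*p)) := (Real.exp_add _ _).symm
      _ ≤ Real.exp (p*δ/2) * Real.exp (-δ^2*p*N/6) := by
          rw [← Real.exp_add]
          apply Real.exp_le_exp.2
          have hL := log_ineq1 hδ0.le hδ1.le
          have hkey : 0 ≤ p * N * ((1+δ)*Real.log (1+δ) - δ - δ^2/3) :=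
            mul_nonneg (mul_nonneg hp0.le hN0.le) (by linarith)
          rw [hs1]
          linarith [hkey]
  -- lower tail
  have hlow : (P {ω | K ω ≤ (1-δ) * (p*N)}).toReal
      ≤ Real.exp (p*δ/2) * Real.exp (-δ^2 * p * N / 6) := by
    set t1 : ℝ := Real.log (1-δ) / 2 with ht1def
    have ht1 : t1 ≤ 0 :=
      div_nonpos_of_nonpos_of_nonneg (Real.log_nonpos (by linarith) (by linarith)) (by norm_num)
    have he2t1 : Real.exp (2 * t1) = 1 - δ := by
      rw [ht1def, show 2 * (Real.log (1-δ)/2) = Real.log (1-δ) by ring]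
      exact Real.exp_log (by linarith)
    have hb := measure_le_le_exp_mul_mgf (X := K) (μ := P) (t := t1) ((1-δ)*(p*N)) ht1
      (by simpa only [hKeq] using hint t1 (Icc 1 n))
    refine hb.trans ?_
    have hdp1 : δ * p ≤ 1/2 := by nlinarith
    have hcle : ∀ (k : ℕ), (N-1)/2 ≤ (k:ℝ) →
        (1 - δ*p)^k ≤ Real.exp (-((N-1)/2 * (δ*p))) := by
      intro k hk
      have h2' : (1 - δ*p) ≤ Real.exp (-(δ*p)) := by
        have := Real.add_one_le_exp (-(δ*p)); linarith
      calc (1 - δ*p)^k ≤ (Real.exp (-(δ*p)))^k := pow_le_pow_left₀ (by linarith) h2' k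
        _ = Real.exp (k * -(δ*p)) := (Real.exp_nat_mul _ k).symm
        _ ≤ Real.exp (-((N-1)/2 * (δ*p))) := by
            apply Real.exp_le_exp.2
            have : (N-1)/2 * (δ*p) ≤ (k:ℝ) * (δ*p) := mul_le_mul_of_nonneg_right hk hdp0
            linarith
    have hmgf1 : mgf K P t1 ≤ Real.exp (-((N-1)/2 * (δ*p))) := by
      have h2 := hmgfb t1
      have hc : 1 + (Real.exp (2*t1) - 1) * p = 1 - δ*p := by rw [he2t1]; ring
      rw [hc] at h2
      have ho' := hcle O.card hoL
      have he' := hcle E'.card heL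
      calc mgf K P t1 = ∫ ω, Real.exp (t1 * K ω) ∂P := rfl
        _ ≤ ((1 - δ*p) ^ O.card + (1 - δ*p) ^ E'.card) / 2 := h2
        _ ≤ Real.exp (-((N-1)/2 * (δ*p))) := by linarith
    calc Real.exp (-t1*((1-δ)*(p*N))) * mgf K P t1
        ≤ Real.exp (-t1*((1-δ)*(p*N))) * Real.exp (-((N-1)/2 * (δ*p))) :=
          mul_le_mul_of_nonneg_left hmgf1 (Real.exp_nonneg _)
      _ = Real.exp (-t1*((1-δ)*(p*N)) + -((N-1)/2*(δ*p))) := (Real.exp_add _ _).symm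
      _ ≤ Real.exp (p*δ/2) * Real.exp (-δ^2*p*N/6) := by
          rw [← Real.exp_add]
          apply Real.exp_le_exp.2
          have hL := log_ineq2 hδ0.le hδ1
          have hkey : 0 ≤ p * N * ((1-δ)*Real.log (1-δ) - δ^2/3 + δ) :=
            mul_nonneg (mul_nonneg hp0.le hN0.le) (by linarith)
          rw [ht1def]
          linarith [hkey]
  -- combine
  have hsub2 : {ω | |K ω - p*N| > δ*(p*N)} ⊆
      {ω | (1+δ)*(p*N) ≤ K ω} ∪ {ω | K ω ≤ (1-δ)*(p*N)} := by
    intro ω hω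
    simp only [Set.mem_setOf_eq, gt_iff_lt] at hω
    simp only [Set.mem_union, Set.mem_setOf_eq]
    rcases lt_abs.1 hω with h' | h'
    · left; linarith
    · right; rw [neg_sub] at h'; linarith
  have hexp2 : Real.exp (p*δ/2) ≤ 2 := by
    have hlog2 : (0.6931471803 : ℝ) < Real.log 2 := Real.log_two_gt_d9
    have h12 : p*δ/2 ≤ Real.log 2 := by nlinarith
    calc Real.exp (p*δ/2) ≤ Real.exp (Real.log 2) := Real.exp_le_exp.2 h12
      _ = 2 := Real.exp_log (by norm_num)
  have hA : P {ω | (1+δ)*(p*N) ≤ K ω}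
      ≤ ENNReal.ofReal (Real.exp (p*δ/2) * Real.exp (-δ^2*p*N/6)) := by
    rw [← ENNReal.ofReal_toReal (measure_ne_top P _)]
    exact ENNReal.ofReal_le_ofReal hup
  have hB : P {ω | K ω ≤ (1-δ)*(p*N)}
      ≤ ENNReal.ofReal (Real.exp (p*δ/2) * Real.exp (-δ^2*p*N/6)) := by
    rw [← ENNReal.ofReal_toReal (measure_ne_top P _)]
    exact ENNReal.ofReal_le_ofReal hlow
  have hfinal : P {ω | |K ω - p*N| > δ*(p*N)}
      ≤ ENNReal.ofReal (4 * Real.exp (-δ^2*p*N/6)) := by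
    calc P {ω | |K ω - p*N| > δ*(p*N)}
        ≤ P ({ω | (1+δ)*(p*N) ≤ K ω} ∪ {ω | K ω ≤ (1-δ)*(p*N)}) := measure_mono hsub2
      _ ≤ P {ω | (1+δ)*(p*N) ≤ K ω} + P {ω | K ω ≤ (1-δ)*(p*N)} := measure_union_le _ _
      _ ≤ ENNReal.ofReal (Real.exp (p*δ/2) * Real.exp (-δ^2*p*N/6))
            + ENNReal.ofReal (Real.exp (p*δ/2) * Real.exp (-δ^2*p*N/6)) := add_le_add hA hB
      _ = ENNReal.ofReal (Real.exp (p*δ/2) * Real.exp (-δ^2*p*N/6)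
            + Real.exp (p*δ/2) * Real.exp (-δ^2*p*N/6)) := (ENNReal.ofReal_add
              (by positivity) (by positivity)).symm
      _ ≤ ENNReal.ofReal (4 * Real.exp (-δ^2*p*N/6)) := by
          apply ENNReal.ofReal_le_ofReal
          nlinarith [Real.exp_pos (-δ^2*p*N/6), Real.exp_pos (p*δ/2)]
  have heq : -δ^2 * α * β * N / 6 = -δ^2*p*N/6 := by rw [hp]; ring
  rw [heq]
  exact hfinal
end

section
/- Let α ∈ (0,1), β = 1−α, f > 0, r ∈ [0,1], ρ ∈ [0,1], v > 0, R_t > 0, with αβρ < 1. Let (X_i)_{i≥1} be i.i.d. with P(X_i = 1) = α, P(X_i = 0) = β, define Z_i = 1 if (X_i, X_{i+1}) = (1,0) and Z_i = 0 otherwise, and let (Y_i)_{i≥1} be i.i.d. exponential random variables with rate f, independent of (X_i). For m ≥ 2 define u_m = [ Σ_{i=1}^{m−1} ( α v Y_i R_t − r ρ v Z_i Y_i R_t ) ] / [ Σ_{i=1}^{m−1} ( v Y_i R_t − ρ v Z_i Y_i R_t ) ]. Then u_m converges almost surely to (α − r α β ρ) / (1 − α β ρ) as m → ∞. -/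
section ExpAux
open MeasureTheory ProbabilityTheory Filter Real Set
open scoped ENNReal NNReal

lemma expMeasure_eq (f : ℝ) :
    expMeasure f = volume.withDensity (fun x => (Real.toNNReal (exponentialPDFReal f x) : ℝ≥0∞)) := by
  rfl

lemma exp_smul_eq (f : ℝ) (hf : 0 < f) (x : ℝ) :
    (Real.toNNReal (exponentialPDFReal f x)) • x
      = Set.indicator (Set.Ioi 0) (fun t => f * (t ^ (1:ℝ) * Real.exp (-(f * t)))) x := by
  rw [NNReal.smul_def, Real.coe_toNNReal _ (exponentialPDFReal_nonneg hf x)]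
  unfold exponentialPDFReal gammaPDFReal
  rcases lt_trichotomy x 0 with h | h | h
  · rw [if_neg (not_le.mpr h), Set.indicator_of_notMem (by simpa using h.le)]
    simp
  · subst h
    simp
  · rw [if_pos h.le, Set.indicator_of_mem (by exact h)]
    rw [Real.rpow_one, Real.Gamma_one]
    norm_num
    ring

lemma exp_integrable (f : ℝ) (hf : 0 < f) : Integrable (fun x => x) (expMeasure f) := by
  rw [expMeasure_eq, integrable_withDensity_iff_integrable_smul
    ((measurable_exponentialPDFReal f).real_toNNReal)]
  rw [integrable_congr (Filter.Eventually.of_forall (exp_smul_eq f hf))]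
  rw [integrable_indicator_iff measurableSet_Ioi]
  have h := integrableOn_rpow_mul_exp_neg_mul_rpow (by norm_num : (-1:ℝ) < 1) (zero_lt_one : (0:ℝ) < 1) hf
  have h2 : IntegrableOn (fun t : ℝ => t ^ (1:ℝ) * Real.exp (-(f * t))) (Set.Ioi 0) := by
    refine h.congr_fun (fun x hx => ?_) measurableSet_Ioi
    simp [Real.rpow_one, neg_mul]

  exact h2.const_mul f

lemma exp_mean (f : ℝ) (hf : 0 < f) : ∫ x, x ∂(expMeasure f) = 1 / f := by
  rw [expMeasure_eq, integral_withDensity_eq_integral_smul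
    ((measurable_exponentialPDFReal f).real_toNNReal)]
  rw [integral_congr_ae (Filter.Eventually.of_forall (exp_smul_eq f hf))]
  rw [integral_indicator measurableSet_Ioi, integral_const_mul]
  have : ∫ t in Set.Ioi (0:ℝ), t ^ ((2:ℝ) - 1) * Real.exp (-(f * t)) = (1/f) ^ (2:ℝ) * Real.Gamma 2 :=
    integral_rpow_mul_exp_neg_mul_Ioi (by norm_num) hf
  have h2 : Real.Gamma 2 = 1 := by
    rw [show (2:ℝ) = (1:ℕ) + 1 by norm_num, Real.Gamma_nat_eq_factorial]
    norm_num
  rw [h2, mul_one, show (2:ℝ) - 1 = 1 by norm_num] at this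
  rw [this, show (2:ℝ) = ((2:ℕ):ℝ) by norm_num, Real.rpow_natCast]
  field_simp
end ExpAux

section MainAux
open MeasureTheory ProbabilityTheory Finset Filter
open scoped ENNReal NNReal Topology

lemma bern_law {μ : Measure ℝ} [IsProbabilityMeasure μ] {a b : ℝ} (ha : 0 ≤ a) (hb : 0 ≤ b)
    (hab : a + b = 1) (h1 : μ {1} = ENNReal.ofReal a) (h0 : μ {0} = ENNReal.ofReal b) :
    μ = ENNReal.ofReal a • Measure.dirac 1 + ENNReal.ofReal b • Measure.dirac 0 := by
  have hone : ENNReal.ofReal a + ENNReal.ofReal b = 1 := by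
    rw [← ENNReal.ofReal_add ha hb, hab]; simp
  have h01 : μ {0, 1} = 1 := by
    rw [Set.insert_eq, measure_union (by simp) (measurableSet_singleton 1), h0, h1,
      ← ENNReal.ofReal_add hb ha, show b + a = 1 by linarith]
    simp
  have hc : μ (({0, 1} : Set ℝ)ᶜ) = 0 := by
    rw [measure_compl (by measurability) (measure_ne_top _ _), measure_univ, h01, tsub_self]
  ext s hs
  have h2 : μ (s \ {0, 1}) = 0 :=
    measure_mono_null (Set.diff_eq s _ ▸ Set.inter_subset_right) hc
  have key : μ s = μ (s ∩ {0, 1}) := by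
    have h3 := measure_inter_add_diff (μ := μ) s
      (show MeasurableSet ({0, 1} : Set ℝ) by measurability)
    rw [h2, add_zero] at h3
    exact h3.symm
  rw [key, Measure.add_apply, Measure.smul_apply, Measure.smul_apply, smul_eq_mul, smul_eq_mul,
    Measure.dirac_apply' _ hs, Measure.dirac_apply' _ hs]
  by_cases k0 : (0 : ℝ) ∈ s <;> by_cases k1 : (1 : ℝ) ∈ s
  · have hss : s ∩ {0, 1} = {0, 1} :=
      Set.inter_eq_right.mpr (by rintro x (rfl | rfl) <;> assumption)
    rw [hss, h01]
    simp only [Set.indicator_of_mem k1, Set.indicator_of_mem k0, Pi.one_apply, mul_one]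
    exact hone.symm
  · have hss : s ∩ {0, 1} = {0} := by
      ext x
      simp only [Set.mem_inter_iff, Set.mem_insert_iff, Set.mem_singleton_iff]
      constructor
      · rintro ⟨hx, rfl | rfl⟩; · rfl
        · exact absurd hx k1
      · rintro rfl; exact ⟨k0, Or.inl rfl⟩
    rw [hss, h0]
    simp [Set.indicator_of_mem, Set.indicator_of_notMem, k0, k1]
  · have hss : s ∩ {0, 1} = {1} := by
      ext x
      simp only [Set.mem_inter_iff, Set.mem_insert_iff, Set.mem_singleton_iff]
      constructor
      · rintro ⟨hx, rfl | rfl⟩; · exact absurd hx k0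
        · rfl
      · rintro rfl; exact ⟨k1, Or.inr rfl⟩
    rw [hss, h1]
    simp [Set.indicator_of_mem, Set.indicator_of_notMem, k0, k1]
  · have hss : s ∩ {0, 1} = ∅ := by
      ext x
      simp only [Set.mem_inter_iff, Set.mem_insert_iff, Set.mem_singleton_iff,
        Set.mem_empty_iff_false, iff_false, not_and]
      rintro hx (rfl | rfl)
      exacts [k0 hx, k1 hx]
    rw [hss]
    simp [Set.indicator_of_notMem, k0, k1]

lemma sum_even_odd (g : ℕ → ℝ) (n : ℕ) :
    ∑ i ∈ range n, g i
      = ∑ k ∈ range ((n + 1) / 2), g (2 * k) + ∑ k ∈ range (n / 2), g (2 * k + 1) := by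
  induction n with
  | zero => simp
  | succ n ih =>
    rw [Finset.sum_range_succ, ih]
    rcases Nat.even_or_odd n with ⟨m, rfl⟩ | ⟨m, rfl⟩
    · rw [show (m + m + 1 + 1) / 2 = m + 1 from by omega, show (m + m + 1) / 2 = m from by omega,
        show (m + m) / 2 = m from by omega,
        Finset.sum_range_succ (fun k => g (2 * k)) m, show 2 * m = m + m from by omega]
      ring
    · rw [show (2 * m + 1 + 1 + 1) / 2 = m + 1 from by omega,
        show (2 * m + 1 + 1) / 2 = m + 1 from by omega,
        show (2 * m + 1) / 2 = m from by omega,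
        Finset.sum_range_succ (fun k => g (2 * k + 1)) m]
      ring

lemma half_lim (c : ℕ → ℕ) (h : ∀ n : ℕ, ((n : ℝ) - 1) / 2 ≤ c n ∧ (c n : ℝ) ≤ ((n : ℝ) + 1) / 2) :
    Tendsto (fun n : ℕ => (c n : ℝ) / n) atTop (𝓝 (1 / 2)) := by
  have hlow : Tendsto (fun n : ℕ => ((n : ℝ) - 1) / 2 / n) atTop (𝓝 (1 / 2)) := by
    have h1 : Tendsto (fun n : ℕ => (1 - (n : ℝ)⁻¹) / 2) atTop (𝓝 (1 / 2)) := by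
      have := ((tendsto_const_nhds (x := (1 : ℝ))).sub
        tendsto_inv_atTop_nhds_zero_nat).div_const 2
      simpa using this
    apply h1.congr'
    filter_upwards [eventually_ge_atTop 1] with n hn
    have hn0 : (n : ℝ) ≠ 0 := Nat.cast_ne_zero.mpr (by omega)
    field_simp
  have hhigh : Tendsto (fun n : ℕ => ((n : ℝ) + 1) / 2 / n) atTop (𝓝 (1 / 2)) := by
    have h1 : Tendsto (fun n : ℕ => (1 + (n : ℝ)⁻¹) / 2) atTop (𝓝 (1 / 2)) := by
      have := ((tendsto_const_nhds (x := (1 : ℝ))).add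
        tendsto_inv_atTop_nhds_zero_nat).div_const 2
      simpa using this
    apply h1.congr'
    filter_upwards [eventually_ge_atTop 1] with n hn
    have hn0 : (n : ℝ) ≠ 0 := Nat.cast_ne_zero.mpr (by omega)
    field_simp
  apply tendsto_of_tendsto_of_tendsto_of_le_of_le' hlow hhigh
  · filter_upwards [eventually_gt_atTop 0] with n hn
    have hn0 : (0 : ℝ) < n := by exact_mod_cast hn
    gcongr
    exact (h n).1
  · filter_upwards [eventually_gt_atTop 0] with n hn
    have hn0 : (0 : ℝ) < n := by exact_mod_cast hn
    gcongr
    exact (h n).2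

lemma indep_triple {ι Ω : Type*} [DecidableEq ι] [MeasurableSpace Ω] {P : Measure Ω} {g : ι → Ω → ℝ}
    (hg : ∀ i, Measurable (g i))
    (h : iIndepFun g P)
    {i1 i2 i3 j1 j2 j3 : ι} (hd : Disjoint ({i1, i2, i3} : Finset ι) ({j1, j2, j3} : Finset ι)) :
    IndepFun (fun ω => (g i1 ω, g i2 ω, g i3 ω)) (fun ω => (g j1 ω, g j2 ω, g j3 ω)) P := by
  let φ (a b c : ι) (v : ({a, b, c} : Finset ι) → ℝ) : ℝ × ℝ × ℝ :=
    (v ⟨a, by simp⟩, v ⟨b, by simp⟩, v ⟨c, by simp⟩)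
  have hφ : ∀ a b c : ι, Measurable (φ a b c) := fun a b c =>
    ((measurable_pi_apply _).prodMk ((measurable_pi_apply _).prodMk (measurable_pi_apply _)))
  exact (h.indepFun_finset {i1, i2, i3} {j1, j2, j3} hd hg).comp (hφ i1 i2 i3) (hφ j1 j2 j3)

lemma avg_split (g : ℕ → ℝ) (m : ℝ)
    (he : Tendsto (fun n : ℕ => (∑ k ∈ range n, g (2 * k)) / n) atTop (𝓝 m))
    (ho : Tendsto (fun n : ℕ => (∑ k ∈ range n, g (2 * k + 1)) / n) atTop (𝓝 m)) :
    Tendsto (fun n : ℕ => (∑ i ∈ range n, g i) / n) atTop (𝓝 m) := by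
  have hce : Tendsto (fun n : ℕ => (n + 1) / 2) atTop atTop :=
    Filter.tendsto_atTop.mpr fun b => eventually_atTop.mpr ⟨2 * b, fun n hn => by omega⟩
  have hco : Tendsto (fun n : ℕ => n / 2) atTop atTop :=
    Filter.tendsto_atTop.mpr fun b => eventually_atTop.mpr ⟨2 * b + 1, fun n hn => by omega⟩
  have hhe : Tendsto (fun n : ℕ => (((n + 1) / 2 : ℕ) : ℝ) / n) atTop (𝓝 (1 / 2)) := by
    apply half_lim
    intro n
    have h1 : n ≤ 2 * ((n + 1) / 2) := by omega
    have h2 : 2 * ((n + 1) / 2) ≤ n + 1 := by omega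
    have c1 : (n : ℝ) ≤ 2 * (((n + 1) / 2 : ℕ) : ℝ) := by exact_mod_cast h1
    have c2 : 2 * (((n + 1) / 2 : ℕ) : ℝ) ≤ (n : ℝ) + 1 := by exact_mod_cast h2
    constructor <;> linarith
  have hho : Tendsto (fun n : ℕ => ((n / 2 : ℕ) : ℝ) / n) atTop (𝓝 (1 / 2)) := by
    apply half_lim
    intro n
    have h1 : n ≤ 2 * (n / 2) + 1 := by omega
    have h2 : 2 * (n / 2) ≤ n := by omega
    have c1 : (n : ℝ) ≤ 2 * ((n / 2 : ℕ) : ℝ) + 1 := by exact_mod_cast h1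
    have c2 : 2 * ((n / 2 : ℕ) : ℝ) ≤ (n : ℝ) := by exact_mod_cast h2
    constructor <;> linarith
  have t1 : Tendsto (fun n : ℕ => (((n + 1) / 2 : ℕ) : ℝ) / n *
      ((∑ k ∈ range ((n + 1) / 2), g (2 * k)) / (((n + 1) / 2 : ℕ) : ℝ))) atTop
      (𝓝 (1 / 2 * m)) := hhe.mul (he.comp hce)
  have t2 : Tendsto (fun n : ℕ => ((n / 2 : ℕ) : ℝ) / n *
      ((∑ k ∈ range (n / 2), g (2 * k + 1)) / ((n / 2 : ℕ) : ℝ))) atTop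
      (𝓝 (1 / 2 * m)) := hho.mul (ho.comp hco)
  have t3 := t1.add t2
  rw [show 1 / 2 * m + 1 / 2 * m = m by ring] at t3
  apply t3.congr'
  filter_upwards [eventually_ge_atTop 2] with n hn
  have key : ∀ (a : ℝ) (c : ℕ), (c : ℝ) ≠ 0 → ∀ x : ℝ, (c : ℝ) / x * (a / c) = a / x := by
    intro a c hc x
    rw [div_mul_div_comm, mul_comm (c : ℝ) a, mul_div_mul_right _ _ hc]
  rw [key _ _ (Nat.cast_ne_zero.mpr (by omega)) _, key _ _ (Nat.cast_ne_zero.mpr (by omega)) _,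
    ← add_div, ← sum_even_odd]

lemma disj_helper (a b c d e g : ℕ) (h1 : a ≠ d) (h2 : a ≠ e) (h3 : b ≠ d) (h4 : b ≠ e)
    (h5 : c ≠ g) :
    Disjoint ({Sum.inl a, Sum.inl b, Sum.inr c} : Finset (ℕ ⊕ ℕ))
      {Sum.inl d, Sum.inl e, Sum.inr g} := by
  simp only [Finset.disjoint_left, Finset.mem_insert, Finset.mem_singleton]
  rintro x (rfl | rfl | rfl) (h | h | h) <;>
    first
      | (simp at h <;> omega)
      | (injection h with h'; omega)
end MainAux

section Main
open MeasureTheory ProbabilityTheory Finset Filter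
open scoped ENNReal NNReal Topology

/-- the selection function for `W` -/
noncomputable def Gfun (p : ℝ × ℝ × ℝ) : ℝ :=
  Set.indicator {q : ℝ × ℝ × ℝ | q.1 = 1 ∧ q.2.1 = 0} (fun q => q.2.2) p

lemma Gfun_meas : Measurable Gfun := by
  apply Measurable.indicator (measurable_snd.comp measurable_snd)
  have : {q : ℝ × ℝ × ℝ | q.1 = 1 ∧ q.2.1 = 0}
      = (Prod.fst ⁻¹' {1}) ∩ ((fun q : ℝ × ℝ × ℝ => q.2.1) ⁻¹' {0}) := rfl
  rw [this]
  exact (measurable_fst (measurableSet_singleton 1)).inter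
    ((measurable_fst.comp measurable_snd) (measurableSet_singleton 0))

lemma Gfun_eq (x y b : ℝ) : Gfun (x, y, b) = if x = 1 ∧ y = 0 then b else 0 := by
  rw [Gfun, Set.indicator_apply]
  rfl

noncomputable def Wfun {Ω : Type*} (X Y : ℕ → Ω → ℝ) (i : ℕ) (ω : Ω) : ℝ :=
  Gfun (X (i + 1) ω, (X (i + 2) ω, Y (i + 1) ω))

/-- Lemma 2 of the paper (transaction inclusion attack): with i.i.d. key-block indicators
`(X i)_{i ≥ 1}` (`P(X i = 1) = α`, `P(X i = 0) = β = 1-α`), pair indicators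
`Z i = 1_{(X i, X (i+1)) = (1,0)}`, and i.i.d. exponential inter-block times `(Y i)_{i ≥ 1}`
of rate `f` independent of the `X`'s, the selfish miner's relative revenue
`u_m = Σ(αvY_iR_t - rρvZ_iY_iR_t) / Σ(vY_iR_t - ρvZ_iY_iR_t)` converges a.s. to
`(α - rαβρ)/(1 - αβρ)`. -/
theorem stmt5 {Ω : Type*} [MeasurableSpace Ω] (P : Measure Ω) [IsProbabilityMeasure P]
    (α β f r ρ v Rt : ℝ) (hα0 : 0 < α) (hα1 : α < 1) (hβ : β = 1 - α) (hf : 0 < f)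
    (hr0 : 0 ≤ r) (hr1 : r ≤ 1) (hρ0 : 0 ≤ ρ) (hρ1 : ρ ≤ 1)
    (hv : 0 < v) (hRt : 0 < Rt) (hαβρ : α * β * ρ < 1)
    (X Y : ℕ → Ω → ℝ) (hXmeas : ∀ i, Measurable (X i)) (hYmeas : ∀ i, Measurable (Y i))
    (hindep : iIndepFun
      (Sum.elim (fun i : ℕ => X (i + 1)) (fun i : ℕ => Y (i + 1))) P)
    (h1 : ∀ i, 1 ≤ i → P {ω | X i ω = 1} = ENNReal.ofReal α)
    (h0 : ∀ i, 1 ≤ i → P {ω | X i ω = 0} = ENNReal.ofReal β)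
    (hY : ∀ i, 1 ≤ i → P.map (Y i) = expMeasure f)
    (Z : ℕ → Ω → ℝ)
    (hZ : ∀ i ω, Z i ω = if X i ω = 1 ∧ X (i + 1) ω = 0 then (1 : ℝ) else 0)
    (u : ℕ → Ω → ℝ)
    (hu : ∀ m ω, u m ω =
      (∑ i ∈ Finset.Icc 1 (m - 1), (α * v * Y i ω * Rt - r * ρ * v * Z i ω * Y i ω * Rt)) /
      (∑ i ∈ Finset.Icc 1 (m - 1), (v * Y i ω * Rt - ρ * v * Z i ω * Y i ω * Rt))) :
    ∀ᵐ ω ∂P, Tendsto (fun m : ℕ => u m ω) atTop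
      (nhds ((α - r * α * β * ρ) / (1 - α * β * ρ))) := by
  have hβ0 : 0 < β := by rw [hβ]; linarith
  have hTmeas : ∀ k, Measurable
      (Sum.elim (fun i : ℕ => X (i + 1)) (fun i : ℕ => Y (i + 1)) k) := by
    rintro (i | i)
    exacts [hXmeas _, hYmeas _]
  -- law of the X's
  have hlawX : ∀ i, 1 ≤ i → P.map (X i)
      = ENNReal.ofReal α • Measure.dirac 1 + ENNReal.ofReal β • Measure.dirac 0 := by
    intro i hi
    haveI : IsProbabilityMeasure (P.map (X i)) :=
      Measure.isProbabilityMeasure_map (hXmeas i).aemeasurable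
    refine bern_law hα0.le hβ0.le (by rw [hβ]; ring) ?_ ?_
    · rw [Measure.map_apply (hXmeas i) (measurableSet_singleton 1)]
      exact h1 i hi
    · rw [Measure.map_apply (hXmeas i) (measurableSet_singleton 0)]
      exact h0 i hi
  -- integrability and mean of the Y's
  have hYint : ∀ i, 1 ≤ i → Integrable (Y i) P := by
    intro i hi
    have h := exp_integrable f hf
    rw [← hY i hi] at h
    exact (integrable_map_measure measurable_id.aestronglyMeasurable
      (hYmeas i).aemeasurable).mp h
  have hYmean : ∀ i, 1 ≤ i → ∫ ω, Y i ω ∂P = 1 / f := by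
    intro i hi
    rw [← exp_mean f hf, ← hY i hi,
      integral_map (hYmeas i).aemeasurable (f := fun x => x)
        measurable_id.aestronglyMeasurable]
  -- SLLN for the Y's
  have hB : ∀ᵐ ω ∂P, Tendsto (fun n : ℕ => (∑ i ∈ range n, Y (i + 1) ω) / n) atTop
      (𝓝 (1 / f)) := by
    have hident : ∀ i : ℕ, IdentDistrib (fun ω => Y (i + 1) ω) (fun ω => Y (0 + 1) ω) P P :=
      fun i => ⟨(hYmeas _).aemeasurable, (hYmeas _).aemeasurable,
        by rw [show (fun ω => Y (i+1) ω) = Y (i+1) from rfl,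
               show (fun ω => Y (0+1) ω) = Y 1 from rfl, hY _ (by omega), hY _ (by omega)]⟩
    have hpind : Pairwise (Function.onFun (IndepFun · · P) (fun i : ℕ => fun ω => Y (i + 1) ω)) := by
      intro i j hij
      exact hindep.indepFun (show (Sum.inr i : ℕ ⊕ ℕ) ≠ Sum.inr j by simpa using hij)
    have hint : Integrable (fun ω => Y (0 + 1) ω) P := hYint 1 le_rfl
    have h := strong_law_ae_real (fun i ω => Y (i + 1) ω) hint hpind hident
    have he : (∫ ω, Y (0 + 1) ω ∂P) = 1 / f := hYmean 1 le_rfl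
    rw [he] at h
    exact h
  -- the W sequence
  set W : ℕ → Ω → ℝ := Wfun X Y with hWdef
  have hWmeas : ∀ i, Measurable (W i) := fun i =>
    Gfun_meas.comp ((hXmeas _).prodMk ((hXmeas _).prodMk (hYmeas _)))
  -- joint law of triples
  have htriple : ∀ i : ℕ, P.map (fun ω => (X (i + 1) ω, (X (i + 2) ω, Y (i + 1) ω)))
      = (ENNReal.ofReal α • Measure.dirac (1:ℝ) + ENNReal.ofReal β • Measure.dirac (0:ℝ)).prod
        ((ENNReal.ofReal α • Measure.dirac (1:ℝ) + ENNReal.ofReal β • Measure.dirac (0:ℝ)).prod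
          (expMeasure f)) := by
    intro i
    have hpair : IndepFun (X (i + 2)) (Y (i + 1)) P :=
      hindep.indepFun (show (Sum.inl (i + 1) : ℕ ⊕ ℕ) ≠ Sum.inr i by simp)
    have h2 : P.map (fun ω => (X (i + 2) ω, Y (i + 1) ω))
        = (ENNReal.ofReal α • Measure.dirac (1:ℝ) + ENNReal.ofReal β • Measure.dirac (0:ℝ)).prod
          (expMeasure f) := by
      rw [← hlawX (i + 2) (by omega), ← hY (i + 1) (by omega)]
      exact (indepFun_iff_map_prod_eq_prod_map_map (hXmeas _).aemeasurable
        (hYmeas _).aemeasurable).mp hpair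
    have houter : IndepFun (X (i + 1)) (fun ω => (X (i + 2) ω, Y (i + 1) ω)) P := by
      have h3 := hindep.indepFun_prodMk hTmeas (Sum.inl (i + 1)) (Sum.inr i) (Sum.inl i)
        (by simp) (by simp)
      exact h3.symm
    rw [← h2, ← hlawX (i + 1) (by omega)]
    exact (indepFun_iff_map_prod_eq_prod_map_map (hXmeas _).aemeasurable
      ((hXmeas _).aemeasurable.prodMk (hYmeas _).aemeasurable)).mp houter
  have identW : ∀ i j : ℕ, IdentDistrib (W i) (W j) P P := by
    intro i j
    have hid : IdentDistrib (fun ω => (X (i + 1) ω, (X (i + 2) ω, Y (i + 1) ω)))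
        (fun ω => (X (j + 1) ω, (X (j + 2) ω, Y (j + 1) ω))) P P :=
      ⟨((hXmeas _).prodMk ((hXmeas _).prodMk (hYmeas _))).aemeasurable,
       ((hXmeas _).prodMk ((hXmeas _).prodMk (hYmeas _))).aemeasurable,
       by rw [htriple i, htriple j]⟩
    exact hid.comp Gfun_meas
  have hWint : Integrable (W 0) P := by
    refine Integrable.mono (hYint 1 le_rfl) (hWmeas 0).aestronglyMeasurable ?_
    apply Filter.Eventually.of_forall
    intro ω
    simp only [hWdef, Wfun, Gfun_eq]
    split_ifs with h
    · simp
    · simp [abs_nonneg]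
  -- mean of W 0
  have hWmean : ∫ ω, W 0 ω ∂P = α * β * (1 / f) := by
    have hcs : MeasurableSet {q : ℝ × ℝ | q.1 = 1 ∧ q.2 = 0} := by
      have : {q : ℝ × ℝ | q.1 = 1 ∧ q.2 = 0}
          = (Prod.fst ⁻¹' {1}) ∩ (Prod.snd ⁻¹' {0}) := rfl
      rw [this]
      exact (measurable_fst (measurableSet_singleton 1)).inter
        (measurable_snd (measurableSet_singleton 0))
    have hc : Measurable (fun p : ℝ × ℝ => if p.1 = 1 ∧ p.2 = 0 then (1 : ℝ) else 0) := by
      have heq2 : (fun p : ℝ × ℝ => if p.1 = 1 ∧ p.2 = 0 then (1 : ℝ) else 0)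
          = Set.indicator {q : ℝ × ℝ | q.1 = 1 ∧ q.2 = 0} (fun _ => (1 : ℝ)) := by
        funext p
        rw [Set.indicator_apply]
        rfl
      rw [heq2]
      exact measurable_const.indicator hcs
    have hindZ : IndepFun (fun ω => if X 1 ω = 1 ∧ X 2 ω = 0 then (1 : ℝ) else 0) (Y 1) P := by
      have hpair := hindep.indepFun_prodMk hTmeas (Sum.inl 0) (Sum.inl 1) (Sum.inr 0)
        (by simp) (by simp)
      exact hpair.comp hc measurable_id
    have hW0 : W 0 = (fun ω => if X 1 ω = 1 ∧ X 2 ω = 0 then (1 : ℝ) else 0) * Y 1 := by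
      funext ω
      simp only [hWdef, Wfun, Gfun_eq, Pi.mul_apply]
      split_ifs <;> ring
    rw [hW0, hindZ.integral_mul_eq_mul_integral (hc.comp ((hXmeas 1).prodMk (hXmeas 2))).aestronglyMeasurable
      (hYmeas 1).aestronglyMeasurable]
    have hS : MeasurableSet ({ω | X 1 ω = 1} ∩ {ω | X 2 ω = 0}) :=
      ((hXmeas 1) (measurableSet_singleton 1)).inter ((hXmeas 2) (measurableSet_singleton 0))
    have hiZ : (∫ ω, (if X 1 ω = 1 ∧ X 2 ω = 0 then (1 : ℝ) else 0) ∂P) = α * β := by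
      have heq : (fun ω => if X 1 ω = 1 ∧ X 2 ω = 0 then (1 : ℝ) else 0)
          = Set.indicator ({ω | X 1 ω = 1} ∩ {ω | X 2 ω = 0}) 1 := by
        funext ω
        rw [Set.indicator_apply]
        rfl
      rw [heq, integral_indicator_one hS]
      have hXX : IndepFun (X 1) (X 2) P :=
        hindep.indepFun (show (Sum.inl 0 : ℕ ⊕ ℕ) ≠ Sum.inl 1 by simp)
      have := hXX.measure_inter_preimage_eq_mul {1} {0} (measurableSet_singleton 1)
        (measurableSet_singleton 0)
      rw [show X 1 ⁻¹' {1} = {ω | X 1 ω = 1} from rfl,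
        show X 2 ⁻¹' {0} = {ω | X 2 ω = 0} from rfl, h1 1 le_rfl, h0 2 (by omega)] at this
      rw [measureReal_def, this, ← ENNReal.ofReal_mul hα0.le, ENNReal.toReal_ofReal (by positivity)]
    rw [hiZ, hYmean 1 le_rfl]
  -- pairwise independence helpers
  have hWindep : ∀ i j : ℕ,
      Disjoint ({Sum.inl i, Sum.inl (i + 1), Sum.inr i} : Finset (ℕ ⊕ ℕ))
        {Sum.inl j, Sum.inl (j + 1), Sum.inr j} →
      IndepFun (W i) (W j) P := by
    intro i j hd
    have h3 := (indep_triple hTmeas hindep hd).comp Gfun_meas Gfun_meas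
    exact h3
  -- SLLN for even indices
  have hWev : ∀ᵐ ω ∂P, Tendsto (fun n : ℕ => (∑ k ∈ range n, W (2 * k) ω) / n) atTop
      (𝓝 (α * β * (1 / f))) := by
    have hident : ∀ k : ℕ, IdentDistrib (fun ω => W (2 * k) ω) (fun ω => W (2 * 0) ω) P P :=
      fun k => identW (2 * k) (2 * 0)
    have hpind : Pairwise (Function.onFun (IndepFun · · P) (fun k : ℕ => fun ω => W (2 * k) ω)) := by
      intro k l hkl
      apply hWindep
      exact disj_helper _ _ _ _ _ _ (by omega) (by omega) (by omega) (by omega) (by omega)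
    have hint : Integrable (fun ω => W (2 * 0) ω) P := (identW (2 * 0) 0).integrable_iff.mpr hWint
    have h := strong_law_ae_real (fun k ω => W (2 * k) ω) hint hpind hident
    have he : (∫ ω, W (2 * 0) ω ∂P) = α * β * (1 / f) := by
      rw [(identW (2 * 0) 0).integral_eq, hWmean]
    rw [he] at h
    exact h
  -- SLLN for odd indices
  have hWod : ∀ᵐ ω ∂P, Tendsto (fun n : ℕ => (∑ k ∈ range n, W (2 * k + 1) ω) / n) atTop
      (𝓝 (α * β * (1 / f))) := by
    have hident : ∀ k : ℕ, IdentDistrib (fun ω => W (2 * k + 1) ω) (fun ω => W (2 * 0 + 1) ω) P P :=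
      fun k => identW (2 * k + 1) (2 * 0 + 1)
    have hpind : Pairwise (Function.onFun (IndepFun · · P) (fun k : ℕ => fun ω => W (2 * k + 1) ω)) := by
      intro k l hkl
      apply hWindep
      exact disj_helper _ _ _ _ _ _ (by omega) (by omega) (by omega) (by omega) (by omega)
    have hint : Integrable (fun ω => W (2 * 0 + 1) ω) P :=
      (identW (2 * 0 + 1) 0).integrable_iff.mpr hWint
    have h := strong_law_ae_real (fun k ω => W (2 * k + 1) ω) hint hpind hident
    have he : (∫ ω, W (2 * 0 + 1) ω ∂P) = α * β * (1 / f) := by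
      rw [(identW (2 * 0 + 1) 0).integral_eq, hWmean]
    rw [he] at h
    exact h
  have hW : ∀ᵐ ω ∂P, Tendsto (fun n : ℕ => (∑ i ∈ range n, W i ω) / n) atTop
      (𝓝 (α * β * (1 / f))) := by
    filter_upwards [hWev, hWod] with ω he ho
    exact avg_split (fun i => W i ω) _ he ho
  -- final assembly
  filter_upwards [hB, hW] with ω hbω hwω
  -- per-term identification
  have hterm : ∀ i : ℕ, Z (1 + i) ω * Y (1 + i) ω = W i ω := by
    intro i
    rw [hZ, show 1 + i = i + 1 by omega, show i + 1 + 1 = i + 2 by omega]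
    simp only [hWdef, Wfun, Gfun_eq]
    split_ifs <;> ring
  -- eventual form of u
  have hev : ∀ᶠ m : ℕ in atTop, u m ω =
      (α * v * Rt * ((∑ i ∈ range (m - 1), Y (i + 1) ω) / (m - 1 : ℕ))
        - r * ρ * v * Rt * ((∑ i ∈ range (m - 1), W i ω) / (m - 1 : ℕ)))
      / (v * Rt * ((∑ i ∈ range (m - 1), Y (i + 1) ω) / (m - 1 : ℕ))
        - ρ * v * Rt * ((∑ i ∈ range (m - 1), W i ω) / (m - 1 : ℕ))) := by
    filter_upwards [eventually_ge_atTop 2] with m hm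
    have hn0 : ((m - 1 : ℕ) : ℝ) ≠ 0 := Nat.cast_ne_zero.mpr (by omega)
    rw [hu]
    have hIcc : Finset.Icc 1 (m - 1) = Finset.Ico 1 m := by
      ext x
      simp only [Finset.mem_Icc, Finset.mem_Ico]
      omega
    rw [hIcc, Finset.sum_Ico_eq_sum_range, Finset.sum_Ico_eq_sum_range]
    have hnum : ∑ i ∈ range (m - 1), (α * v * Y (1 + i) ω * Rt
        - r * ρ * v * Z (1 + i) ω * Y (1 + i) ω * Rt)
        = α * v * Rt * (∑ i ∈ range (m - 1), Y (i + 1) ω)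
          - r * ρ * v * Rt * (∑ i ∈ range (m - 1), W i ω) := by
      rw [Finset.sum_sub_distrib, Finset.mul_sum, Finset.mul_sum]
      congr 1
      · apply Finset.sum_congr rfl
        intro i _
        rw [show 1 + i = i + 1 by omega]
        ring
      · apply Finset.sum_congr rfl
        intro i _
        rw [show r * ρ * v * Z (1 + i) ω * Y (1 + i) ω * Rt
            = r * ρ * v * Rt * (Z (1 + i) ω * Y (1 + i) ω) by ring, hterm i]
    have hden : ∑ i ∈ range (m - 1), (v * Y (1 + i) ω * Rt
        - ρ * v * Z (1 + i) ω * Y (1 + i) ω * Rt)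
        = v * Rt * (∑ i ∈ range (m - 1), Y (i + 1) ω)
          - ρ * v * Rt * (∑ i ∈ range (m - 1), W i ω) := by
      rw [Finset.sum_sub_distrib, Finset.mul_sum, Finset.mul_sum]
      congr 1
      · apply Finset.sum_congr rfl
        intro i _
        rw [show 1 + i = i + 1 by omega]
        ring
      · apply Finset.sum_congr rfl
        intro i _
        rw [show ρ * v * Z (1 + i) ω * Y (1 + i) ω * Rt
            = ρ * v * Rt * (Z (1 + i) ω * Y (1 + i) ω) by ring, hterm i]
    rw [hnum, hden]
    have e1 : α * v * Rt * ((∑ i ∈ range (m - 1), Y (i + 1) ω) / ((m - 1 : ℕ) : ℝ))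
        - r * ρ * v * Rt * ((∑ i ∈ range (m - 1), W i ω) / ((m - 1 : ℕ) : ℝ))
        = (α * v * Rt * (∑ i ∈ range (m - 1), Y (i + 1) ω)
          - r * ρ * v * Rt * (∑ i ∈ range (m - 1), W i ω)) / ((m - 1 : ℕ) : ℝ) := by ring
    have e2 : v * Rt * ((∑ i ∈ range (m - 1), Y (i + 1) ω) / ((m - 1 : ℕ) : ℝ))
        - ρ * v * Rt * ((∑ i ∈ range (m - 1), W i ω) / ((m - 1 : ℕ) : ℝ))
        = (v * Rt * (∑ i ∈ range (m - 1), Y (i + 1) ω)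
          - ρ * v * Rt * (∑ i ∈ range (m - 1), W i ω)) / ((m - 1 : ℕ) : ℝ) := by ring
    rw [e1, e2, div_div_div_comm, div_self hn0, div_one]
  -- limit of the eventual form
  have hsub : Tendsto (fun m : ℕ => m - 1) atTop atTop := tendsto_sub_atTop_nat 1
  have hnum_t : Tendsto (fun m : ℕ =>
      α * v * Rt * ((∑ i ∈ range (m - 1), Y (i + 1) ω) / (m - 1 : ℕ))
        - r * ρ * v * Rt * ((∑ i ∈ range (m - 1), W i ω) / (m - 1 : ℕ))) atTop
      (𝓝 (α * v * Rt * (1 / f) - r * ρ * v * Rt * (α * β * (1 / f)))) :=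
    ((tendsto_const_nhds.mul (hbω.comp hsub)).sub
      (tendsto_const_nhds.mul (hwω.comp hsub)))
  have hden_t : Tendsto (fun m : ℕ =>
      v * Rt * ((∑ i ∈ range (m - 1), Y (i + 1) ω) / (m - 1 : ℕ))
        - ρ * v * Rt * ((∑ i ∈ range (m - 1), W i ω) / (m - 1 : ℕ))) atTop
      (𝓝 (v * Rt * (1 / f) - ρ * v * Rt * (α * β * (1 / f)))) :=
    ((tendsto_const_nhds.mul (hbω.comp hsub)).sub
      (tendsto_const_nhds.mul (hwω.comp hsub)))
  have hden_ne : v * Rt * (1 / f) - ρ * v * Rt * (α * β * (1 / f)) ≠ 0 := by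
    have h1' : v * Rt * (1 / f) - ρ * v * Rt * (α * β * (1 / f))
        = v * Rt / f * (1 - α * β * ρ) := by field_simp
    rw [h1']
    have : 0 < 1 - α * β * ρ := by linarith
    positivity
  have hlim := hnum_t.div hden_t hden_ne
  have hc : v * Rt / f ≠ 0 := by positivity
  have hA : α * v * Rt * (1 / f) - r * ρ * v * Rt * (α * β * (1 / f))
      = v * Rt / f * (α - r * α * β * ρ) := by field_simp
  have hBB : v * Rt * (1 / f) - ρ * v * Rt * (α * β * (1 / f))
      = v * Rt / f * (1 - α * β * ρ) := by field_simp
  have hval : (α * v * Rt * (1 / f) - r * ρ * v * Rt * (α * β * (1 / f)))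
      / (v * Rt * (1 / f) - ρ * v * Rt * (α * β * (1 / f)))
      = (α - r * α * β * ρ) / (1 - α * β * ρ) := by
    rw [hA, hBB, mul_div_mul_left _ _ hc]
  rw [hval] at hlim
  exact Tendsto.congr' (by filter_upwards [hev] with m hm2 using hm2.symm) hlim
end Main
end

section
/- Let α ∈ (0,1), β = 1−α, and let r satisfy α ≤ r ≤ 1. Define g(ρ) = (α − r α β ρ) / (1 − α β ρ) for ρ ∈ [0,1] (note 0 < αβ ≤ 1/4 so the denominator is positive). Then g(ρ) ≤ α for every ρ ∈ [0,1], with g(0) = α; hence max_{ρ ∈ [0,1]} g(ρ) = α, attained at ρ = 0. -/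
open Set

/-- Transaction inclusion attack, case `α ≤ r ≤ 1`: honest behavior `ρ = 0` is optimal
and the selfish miner's limiting relative revenue never exceeds its fair share `α`. -/
theorem stmt7 (α β r : ℝ) (hα0 : 0 < α) (hα1 : α < 1) (hβ : β = 1 - α)
    (hrα : α ≤ r) (hr1 : r ≤ 1) :
    (∀ ρ ∈ Icc (0:ℝ) 1, (α - r * α * β * ρ) / (1 - α * β * ρ) ≤ α) ∧
    (α - r * α * β * 0) / (1 - α * β * 0) = α ∧
    IsGreatest ((fun ρ => (α - r * α * β * ρ) / (1 - α * β * ρ)) '' Icc (0:ℝ) 1) α := by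
  have hβ0 : 0 < β := by rw [hβ]; linarith
  have hub : ∀ ρ ∈ Icc (0:ℝ) 1, (α - r * α * β * ρ) / (1 - α * β * ρ) ≤ α := by
    intro ρ hρ
    obtain ⟨h0, h1⟩ := hρ
    have hden : 0 < 1 - α * β * ρ := by nlinarith [mul_nonneg (mul_pos hα0 hβ0).le h0, mul_le_of_le_one_right (mul_pos hα0 hβ0).le h1, sq_nonneg (α - 1/2)]
    rw [div_le_iff₀ hden]
    nlinarith [mul_nonneg (mul_nonneg (mul_nonneg (sub_nonneg.2 hrα) hα0.le) hβ0.le) h0]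
  have h0 : (α - r * α * β * 0) / (1 - α * β * 0) = α := by norm_num
  refine ⟨hub, h0, ⟨0, by constructor <;> norm_num, h0⟩, ?_⟩
  rintro x ⟨ρ, hρ, rfl⟩
  exact hub ρ hρ
end

section
/- Let α ∈ (0,1), β = 1−α, and let r satisfy 0 ≤ r ≤ α. Define g(ρ) = (α − r α β ρ) / (1 − α β ρ) for ρ ∈ [0,1]. Then max_{ρ ∈ [0,1]} g(ρ) = g(1) = r + (α − r)/(1 − α β); moreover, if r < α then g(1) > α. -/
open Set

/-- Transaction inclusion attack, case `0 ≤ r ≤ α`: withholding all microblocks `ρ = 1`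
is optimal, has value `r + (α - r)/(1 - αβ)`, and strictly exceeds `α` when `r < α`. -/
theorem stmt8 (α β r : ℝ) (hα0 : 0 < α) (hα1 : α < 1) (hβ : β = 1 - α)
    (hr0 : 0 ≤ r) (hrα : r ≤ α) :
    IsGreatest ((fun ρ => (α - r * α * β * ρ) / (1 - α * β * ρ)) '' Icc (0:ℝ) 1)
      ((α - r * α * β * 1) / (1 - α * β * 1)) ∧
    (α - r * α * β * 1) / (1 - α * β * 1) = r + (α - r) / (1 - α * β) ∧
    (r < α → α < (α - r * α * β * 1) / (1 - α * β * 1)) := by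
  subst hβ
  have hab : 0 < α * (1 - α) := mul_pos hα0 (by linarith)
  have hab1 : α * (1 - α) < 1 := by nlinarith
  have hden : ∀ ρ : ℝ, ρ ∈ Icc (0:ℝ) 1 → 0 < 1 - α * (1 - α) * ρ := by
    intro ρ hρ
    have : α * (1 - α) * ρ ≤ α * (1 - α) * 1 := by
      apply mul_le_mul_of_nonneg_left hρ.2 hab.le
    nlinarith
  have hd1 : (0:ℝ) < 1 - α * (1 - α) * 1 := hden 1 ⟨zero_le_one, le_refl 1⟩
  have key : ∀ ρ : ℝ, ρ ∈ Icc (0:ℝ) 1 →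
      (α - r * α * (1 - α) * ρ) / (1 - α * (1 - α) * ρ)
        = r + (α - r) / (1 - α * (1 - α) * ρ) := by
    intro ρ hρ
    have h := hden ρ hρ
    field_simp
    ring
  have hmono : ∀ ρ : ℝ, ρ ∈ Icc (0:ℝ) 1 →
      (α - r * α * (1 - α) * ρ) / (1 - α * (1 - α) * ρ)
        ≤ (α - r * α * (1 - α) * 1) / (1 - α * (1 - α) * 1) := by
    intro ρ hρ
    rw [key ρ hρ, key 1 ⟨zero_le_one, le_refl 1⟩]
    have h1 : 1 - α * (1 - α) * 1 ≤ 1 - α * (1 - α) * ρ := by nlinarith [hρ.2]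
    have := div_le_div_of_nonneg_left (by linarith : (0:ℝ) ≤ α - r) hd1 h1
    linarith
  refine ⟨⟨⟨1, ⟨zero_le_one, le_refl 1⟩, rfl⟩, ?_⟩, ?_, ?_⟩
  · rintro y ⟨ρ, hρ, rfl⟩
    exact hmono ρ hρ
  · rw [key 1 ⟨zero_le_one, le_refl 1⟩]; ring_nf
  · intro hrlt
    rw [key 1 ⟨zero_le_one, le_refl 1⟩]
    have : α - r < (α - r) / (1 - α * (1 - α) * 1) := by
      rw [lt_div_iff₀ hd1]
      nlinarith
    linarith
end

section
/- Let α ∈ (0,1), β = 1−α, and let r satisfy 0 ≤ r ≤ β. Define h(ρ) = (α − (1−r) α β ρ) / (1 − α β ρ) for ρ ∈ [0,1]. Then h(ρ) ≤ α for every ρ ∈ [0,1], with h(0) = α; hence max_{ρ ∈ [0,1]} h(ρ) = α, attained at ρ = 0. -/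
open Set

/-- Longest chain extension attack, case `0 ≤ r ≤ β`: honest behavior `ρ = 0` is optimal
and the selfish miner's limiting relative revenue never exceeds its fair share `α`. -/
theorem stmt9 (α β r : ℝ) (hα0 : 0 < α) (hα1 : α < 1) (hβ : β = 1 - α)
    (hr0 : 0 ≤ r) (hrβ : r ≤ β) :
    (∀ ρ ∈ Icc (0:ℝ) 1, (α - (1 - r) * α * β * ρ) / (1 - α * β * ρ) ≤ α) ∧
    (α - (1 - r) * α * β * 0) / (1 - α * β * 0) = α ∧
    IsGreatest ((fun ρ => (α - (1 - r) * α * β * ρ) / (1 - α * β * ρ)) '' Icc (0:ℝ) 1) α := by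
  have hβ0 : 0 < β := by rw [hβ]; linarith
  have key : ∀ ρ ∈ Icc (0:ℝ) 1, (α - (1 - r) * α * β * ρ) / (1 - α * β * ρ) ≤ α := by
    intro ρ hρ
    obtain ⟨h0, h1⟩ := hρ
    have hab : α * β < 1 := by nlinarith
    have hden : 0 < 1 - α * β * ρ := by nlinarith [mul_pos hα0 hβ0]
    rw [div_le_iff₀ hden]
    have hra : α ≤ 1 - r := by rw [hβ] at hrβ; linarith
    nlinarith [mul_nonneg (mul_nonneg hα0.le hβ0.le) h0]
  have h0 : (α - (1 - r) * α * β * 0) / (1 - α * β * 0) = α := by norm_num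
  exact ⟨key, h0, ⟨⟨0, ⟨le_refl 0, zero_le_one⟩, h0⟩, by rintro x ⟨ρ, hρ, rfl⟩; exact key ρ hρ⟩⟩
end

section
/- Let α ∈ (0,1), β = 1−α, and let r satisfy β ≤ r ≤ 1. Define h(ρ) = (α − (1−r) α β ρ) / (1 − α β ρ) for ρ ∈ [0,1]. Then max_{ρ ∈ [0,1]} h(ρ) = h(1) = 1 − r + (r − β)/(1 − α β); moreover, if r > β then h(1) > α. -/
open Set

/-- Longest chain extension attack, case `β ≤ r ≤ 1`: rejecting all honest microblocks
`ρ = 1` is optimal, has value `1 - r + (r - β)/(1 - αβ)`, and strictly exceeds `α`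
when `r > β`. -/
theorem stmt10 (α β r : ℝ) (hα0 : 0 < α) (hα1 : α < 1) (hβ : β = 1 - α)
    (hrβ : β ≤ r) (hr1 : r ≤ 1) :
    IsGreatest ((fun ρ => (α - (1 - r) * α * β * ρ) / (1 - α * β * ρ)) '' Icc (0:ℝ) 1)
      ((α - (1 - r) * α * β * 1) / (1 - α * β * 1)) ∧
    (α - (1 - r) * α * β * 1) / (1 - α * β * 1) = 1 - r + (r - β) / (1 - α * β) ∧
    (β < r → α < (α - (1 - r) * α * β * 1) / (1 - α * β * 1)) := by
  have hβ0 : 0 < β := by rw [hβ]; linarith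
  have hβ1 : β < 1 := by rw [hβ]; linarith
  have hab : α * β < 1 := by nlinarith
  have hab0 : 0 < α * β := mul_pos hα0 hβ0
  have h1 : (0:ℝ) < 1 - α * β * 1 := by linarith
  refine ⟨⟨⟨1, by constructor <;> norm_num, rfl⟩, ?_⟩, ?_, ?_⟩
  · rintro x ⟨ρ, ⟨h0, hρ1⟩, rfl⟩
    have hden : (0:ℝ) < 1 - α * β * ρ := by nlinarith
    rw [div_le_div_iff₀ hden h1]
    nlinarith [mul_nonneg (mul_nonneg hab0.le (sub_nonneg.2 hρ1)) (sub_nonneg.2 hrβ),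
      mul_nonneg h0 (sub_nonneg.2 hrβ)]
  · have hne : (1:ℝ) - α * β ≠ 0 := by linarith
    field_simp
    linarith [hβ]
  · intro hlt
    rw [lt_div_iff₀ h1]
    nlinarith
end

section
/- Let α ∈ (0,1), β = 1−α, and suppose the fee-split ratio r satisfies α < r < β. Then for every ρ ∈ [0,1], both (α − r α β ρ)/(1 − α β ρ) ≤ α and (α − (1−r) α β ρ)/(1 − α β ρ) ≤ α, with equality in each exactly when ρ = 0. In particular, under the condition α < r < 1 − α, the selfish miner's limiting relative revenue from both the transaction inclusion attack and the longest chain extension attack is maximized by honest behavior (ρ = 0) and equals the fair share α. -/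
open Set

lemma stmt11_aux (α β c ρ : ℝ) (hα0 : 0 < α) (hα1 : α < 1) (hβ : β = 1 - α)
    (hc : α < c) (hρ0 : 0 ≤ ρ) (hρ1 : ρ ≤ 1) :
    (α - c * α * β * ρ) / (1 - α * β * ρ) ≤ α ∧
      ((α - c * α * β * ρ) / (1 - α * β * ρ) = α ↔ ρ = 0) := by
  have hβ0 : 0 < β := by rw [hβ]; linarith
  have hab : α * β * ρ ≤ α * β := mul_le_of_le_one_right (mul_pos hα0 hβ0).le hρ1
  have hd : 0 < 1 - α * β * ρ := by nlinarith [sq_nonneg (2*α-1)]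
  constructor
  · rw [div_le_iff₀ hd]
    nlinarith [mul_nonneg (mul_nonneg (mul_nonneg hα0.le hβ0.le) hρ0) (sub_nonneg.mpr hc.le)]
  · rw [div_eq_iff (ne_of_gt hd)]
    constructor
    · intro h
      have : (c - α) * (α * β) * ρ = 0 := by nlinarith
      have hne : (c - α) * (α * β) ≠ 0 := (mul_pos (sub_pos.mpr hc) (mul_pos hα0 hβ0)).ne'
      exact (mul_eq_zero.mp this).resolve_left hne
    · intro h; subst h; ring

/-- Incentive compatibility of Bitcoin-NG for regular transactions: if the fee-split ratio
satisfies `α < r < β`, then both the transaction inclusion attack and the longest chain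
extension attack give relative revenue at most the fair share `α`, with equality exactly
for honest behavior `ρ = 0`. -/
theorem stmt11 (α β r : ℝ) (hα0 : 0 < α) (hα1 : α < 1) (hβ : β = 1 - α)
    (hrα : α < r) (hrβ : r < β) :
    ∀ ρ ∈ Icc (0:ℝ) 1,
      ((α - r * α * β * ρ) / (1 - α * β * ρ) ≤ α ∧
        (α - (1 - r) * α * β * ρ) / (1 - α * β * ρ) ≤ α) ∧
      ((α - r * α * β * ρ) / (1 - α * β * ρ) = α ↔ ρ = 0) ∧
      ((α - (1 - r) * α * β * ρ) / (1 - α * β * ρ) = α ↔ ρ = 0) := by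
  intro ρ hρ
  obtain ⟨hρ0, hρ1⟩ := hρ
  have h1 := stmt11_aux α β r ρ hα0 hα1 hβ hrα hρ0 hρ1
  have h2 := stmt11_aux α β (1 - r) ρ hα0 hα1 hβ (by rw [hβ] at hrβ; linarith) hρ0 hρ1
  exact ⟨⟨h1.1, h2.1⟩, h1.2, h2.2⟩
end

section
/- Let α ∈ (0,1). The open interval ( α/(1−α), (1−α)/(2−α) ) is nonempty, i.e. α/(1−α) < (1−α)/(2−α), if and only if α < 1 − √2/2 (≈ 0.2929). -/
/-- The interval `(α/(1-α), (1-α)/(2-α))` of valid fee-split ratios (Yin et al.'s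
refined analysis) is nonempty iff `α < 1 - √2/2 ≈ 0.2929`. -/
theorem stmt14 (α : ℝ) (hα0 : 0 < α) (hα1 : α < 1) :
    α / (1 - α) < (1 - α) / (2 - α) ↔ α < 1 - Real.sqrt 2 / 2 := by
  have h1 : (0:ℝ) < 1 - α := by linarith
  have h2 : (0:ℝ) < 2 - α := by linarith
  have hs : Real.sqrt 2 ^ 2 = 2 := Real.sq_sqrt (by norm_num)
  have hs1 : 1 < Real.sqrt 2 := by nlinarith [Real.sqrt_nonneg 2]
  rw [div_lt_div_iff₀ h1 h2]
  constructor <;> intro h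
  · nlinarith [sq_nonneg (α - (1 - Real.sqrt 2 / 2))]
  · nlinarith [sq_nonneg (α - (1 - Real.sqrt 2 / 2))]
end

section
/- Let α ∈ (0,1). The open interval ( α(2−α)/(1+α−α²), (1−α)/(2−α) ) is nonempty, i.e. α(2−α)/(1+α−α²) < (1−α)/(2−α), if and only if α < 1 − √2/2 (≈ 0.2929). -/
/-- The interval `(α(2-α)/(1+α-α²), (1-α)/(2-α))` of valid fee-split ratios (original
Bitcoin-NG analysis) is nonempty iff `α < 1 - √2/2 ≈ 0.2929`. -/
theorem stmt15 (α : ℝ) (hα0 : 0 < α) (hα1 : α < 1) :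
    α * (2 - α) / (1 + α - α ^ 2) < (1 - α) / (2 - α) ↔ α < 1 - Real.sqrt 2 / 2 := by
  have hd1 : (0:ℝ) < 1 + α - α ^ 2 := by nlinarith
  have hd2 : (0:ℝ) < 2 - α := by linarith
  have hs : Real.sqrt 2 ^ 2 = 2 := Real.sq_sqrt (by norm_num)
  have hs0 : (0:ℝ) < Real.sqrt 2 := Real.sqrt_pos.mpr (by norm_num)
  rw [div_lt_div_iff₀ hd1 hd2]
  constructor
  · intro h
    nlinarith [sq_nonneg (α - 1 + Real.sqrt 2 / 2), sq_nonneg (α - 1 - Real.sqrt 2 / 2)]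
  · intro h
    nlinarith [sq_nonneg (α - 1 + Real.sqrt 2 / 2), mul_pos hs0 hα0]
end

section
/- For every α with 0 < α ≤ 1/4, the value r = 2/5 satisfies both microblock incentive constraints of the original Bitcoin-NG analysis: α(2−α)/(1+α−α²) < 2/5 < (1−α)/(2−α). Equivalently, for all α ∈ (0, 1/4], 1 − (1−α)/(1+α−α²) < 2/5 and 2/5 < (1−α)/(2−α). -/
/-- The choice `r = 2/5 = 40%` made in Bitcoin-NG satisfies both microblock incentive
constraints of the original analysis for every selfish power `α ∈ (0, 1/4]`. -/
theorem stmt17 :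
    ∀ α : ℝ, 0 < α → α ≤ 1 / 4 →
      (α * (2 - α) / (1 + α - α ^ 2) < 2 / 5 ∧ 2 / 5 < (1 - α) / (2 - α)) ∧
      (1 - (1 - α) / (1 + α - α ^ 2) < 2 / 5 ∧ 2 / 5 < (1 - α) / (2 - α)) := by
  intro α h1 h2
  have hd : (0:ℝ) < 1 + α - α ^ 2 := by nlinarith
  have hd2 : (0:ℝ) < 2 - α := by nlinarith
  have A : α * (2 - α) / (1 + α - α ^ 2) < 2 / 5 := by
    rw [div_lt_iff₀ hd]; nlinarith
  have B : 2 / 5 < (1 - α) / (2 - α) := by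
    rw [lt_div_iff₀ hd2]; nlinarith
  have C : 1 - (1 - α) / (1 + α - α ^ 2) < 2 / 5 := by
    have : (3:ℝ)/5 < (1 - α) / (1 + α - α ^ 2) := by
      rw [lt_div_iff₀ hd]; nlinarith
    linarith
  exact ⟨⟨A, B⟩, ⟨C, B⟩⟩
end
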